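/- arXiv:2409.19225 — 4 statements merged into one kernel-verified Lean document; each statement's English description precedes it below -/
import Mathlib

section
/- Let X be a finite group, R a solvable normal subgroup of X, and G a finite non-abelian simple subgroup of X. Suppose there is a chain of normal subgroups 1 = R₀ ≤ R₁ ≤ ⋯ ≤ R_s = R of X with each R_{i+1}/R_i elementary abelian, and suppose GR_j = G × R_j but GR_{j+1} ≠ G × R_{j+1} for some j. Then G acts faithfully by conjugation on R_{j+1}/R_j ≅ (ℤ_r)^d, hence G embeds in GL(d, r) with d ≥ 2. -/
open Subgroup
open scoped commutatorElement

section Conj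

variable {X : Type*} [Group X] (A B : Subgroup X)

lemma mapConjSubgroupOf (hA : A.Normal) [B.Normal] (x : X) :
    (A.subgroupOf B).map ((MulAut.conjNormal x : MulAut ↥B) : ↥B →* ↥B)
      = A.subgroupOf B := by
  ext b
  simp only [Subgroup.mem_map]
  constructor
  · rintro ⟨a, ha, rfl⟩
    rw [mem_subgroupOf] at ha ⊢
    simpa [MulAut.conjNormal_apply] using hA.conj_mem _ ha x
  · intro hb
    refine ⟨(MulAut.conjNormal x).symm b, ?_, (MulAut.conjNormal x).apply_symm_apply b⟩
    rw [mem_subgroupOf] at hb ⊢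
    simpa [MulAut.conjNormal_symm_apply] using hA.conj_mem' _ hb x

/-- Conjugation action of `X` on the quotient `B ⧸ (A.subgroupOf B)`. -/
def conjQuot (hA : A.Normal) [B.Normal] [(A.subgroupOf B).Normal] :
    X →* MulAut (↥B ⧸ A.subgroupOf B) where
  toFun x := QuotientGroup.congr (A.subgroupOf B) (A.subgroupOf B)
      (MulAut.conjNormal x) (mapConjSubgroupOf A B hA x)
  map_one' := by
    ext q
    induction q using QuotientGroup.induction_on with
    | H b =>
      have : (MulAut.conjNormal (1 : X) : MulAut ↥B) b = b := by
        ext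
        simp [MulAut.conjNormal_apply]
      simp [QuotientGroup.congr_mk, this]
  map_mul' x y := by
    ext q
    induction q using QuotientGroup.induction_on with
    | H b =>
      have : (MulAut.conjNormal (x * y) : MulAut ↥B) b
          = MulAut.conjNormal x ((MulAut.conjNormal y : MulAut ↥B) b) := by
        ext
        simp [MulAut.conjNormal_apply, mul_assoc]
      simp [QuotientGroup.congr_mk, this, MulAut.mul_apply]

@[simp] lemma conjQuot_mk (hA : A.Normal) [B.Normal] [(A.subgroupOf B).Normal]
    (x : X) (b : ↥B) :
    conjQuot A B hA x (QuotientGroup.mk b)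
      = QuotientGroup.mk ((MulAut.conjNormal x : MulAut ↥B) b) := rfl

end Conj

section GLpart
variable (r d : ℕ) [NeZero r]

/-- A multiplicative automorphism of `Multiplicative ((ℤ/r)^d)` as an additive automorphism. -/
def mulAutToAdd (σ : MulAut (Multiplicative (Fin d → ZMod r))) :
    (Fin d → ZMod r) ≃+ (Fin d → ZMod r) :=
  AddEquiv.mk' ⟨fun x => (σ (Multiplicative.ofAdd x)).toAdd,
      fun x => (σ.symm (Multiplicative.ofAdd x)).toAdd,
      fun x => congrArg Multiplicative.toAdd (σ.symm_apply_apply _),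
      fun x => congrArg Multiplicative.toAdd (σ.apply_symm_apply _)⟩
    (fun a b => congrArg Multiplicative.toAdd (σ.map_mul _ _))

/-- Automorphisms of `(ℤ/r)^d` as an abstract group give linear automorphisms. -/
def mulAutToLin :
    MulAut (Multiplicative (Fin d → ZMod r)) →* ((Fin d → ZMod r) ≃ₗ[ZMod r] (Fin d → ZMod r)) where
  toFun σ := (mulAutToAdd r d σ).toLinearEquiv (fun c x => ZMod.map_smul _ c x)
  map_one' := LinearEquiv.ext fun _ => rfl
  map_mul' _ _ := LinearEquiv.ext fun _ => rfl

lemma mulAutToLin_injective : Function.Injective (mulAutToLin r d) := fun σ τ h =>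
  MulEquiv.ext fun x => DFunLike.congr_fun h x.toAdd

/-- Composite hom into the matrix general linear group. -/
noncomputable def mulAutToGL :
    MulAut (Multiplicative (Fin d → ZMod r)) →* Matrix.GeneralLinearGroup (Fin d) (ZMod r) :=
  ((Matrix.GeneralLinearGroup.toLin.symm.toMonoidHom).comp
    ((LinearMap.GeneralLinearGroup.generalLinearEquiv (ZMod r)
        (Fin d → ZMod r)).symm.toMonoidHom)).comp (mulAutToLin r d)

lemma mulAutToGL_injective : Function.Injective (mulAutToGL r d) := fun σ τ h =>
  mulAutToLin_injective r d
    ((LinearMap.GeneralLinearGroup.generalLinearEquiv (ZMod r) (Fin d → ZMod r)).symm.injective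
      (Matrix.GeneralLinearGroup.toLin.symm.injective h))

end GLpart

/-- If `G` is a non-abelian simple subgroup of a finite group `X`, `A ≤ B` are
normal subgroups of `X` with `B` solvable and `B/A ≅ (ℤ_r)^d` elementary abelian,
and `GA = G × A` while `GB` is not the internal direct product `G × B`, then `G`
embeds in `GL(d,r)` and `d ≥ 2`. -/
theorem embeds_in_GL_of_nondirect {X : Type*} [Group X] [Finite X]
    (A B G : Subgroup X) (hAnorm : A.Normal) (hBnorm : B.Normal) (hAB : A ≤ B)
    (hBsolv : IsSolvable ↥B)
    [IsSimpleGroup ↥G] (hGna : ¬ ∀ a b : ↥G, a * b = b * a)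
    (hcommA : ∀ g ∈ G, ∀ a ∈ A, g * a = a * g) (hGA : G ⊓ A = ⊥)
    (hnd : ¬ (G ⊓ B = ⊥ ∧ ∀ g ∈ G, ∀ b ∈ B, g * b = b * g))
    (r d : ℕ) (hr : r.Prime) (hABn : (A.subgroupOf B).Normal)
    (hiso : Nonempty ((↥B ⧸ A.subgroupOf B) ≃* Multiplicative (Fin d → ZMod r))) :
    2 ≤ d ∧ ∃ f : ↥G →* Matrix.GeneralLinearGroup (Fin d) (ZMod r),
      Function.Injective f := by
  haveI := hBnorm
  haveI := hABn
  haveI : NeZero r := ⟨hr.ne_zero⟩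
  obtain ⟨e⟩ := hiso
  -- the conjugation action of G on B ⧸ A
  set φ : ↥G →* MulAut (↥B ⧸ A.subgroupOf B) := (conjQuot A B hAnorm).comp G.subtype with hφ
  -- φ is injective
  have hφinj : Function.Injective φ := by
    rw [← MonoidHom.ker_eq_bot_iff]
    rcases Subgroup.Normal.eq_bot_or_eq_top (MonoidHom.normal_ker φ) with h | h
    · exact h
    exfalso
    -- every element of G acts trivially on B ⧸ A, so ⁅G, B⁆ ≤ A
    have hGBA : ⁅G, B⁆ ≤ A := by
      rw [Subgroup.commutator_le]
      intro g hg b hb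
      have hmem : (⟨g, hg⟩ : ↥G) ∈ φ.ker := h ▸ Subgroup.mem_top _
      have h1 : φ ⟨g, hg⟩ = 1 := hmem
      have h2 : φ ⟨g, hg⟩ (QuotientGroup.mk (⟨b, hb⟩ : ↥B))
          = QuotientGroup.mk (⟨b, hb⟩ : ↥B) := by rw [h1]; rfl
      have h3 : QuotientGroup.mk ((MulAut.conjNormal g : MulAut ↥B) ⟨b, hb⟩)
          = (QuotientGroup.mk (⟨b, hb⟩ : ↥B) : ↥B ⧸ A.subgroupOf B) := h2
      rw [QuotientGroup.eq] at h3
      rw [Subgroup.mem_subgroupOf] at h3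
      have h4 : ((g * b * g⁻¹)⁻¹ * b : X) ∈ A := by
        simpa [MulAut.conjNormal_apply] using h3
      have h5 : (b⁻¹ * (g * b * g⁻¹) : X) ∈ A := by
        simpa [mul_assoc] using A.inv_mem h4
      have := hAnorm.conj_mem _ h5 b
      simpa [commutatorElement_def, mul_assoc] using this
    have hGAbot : ⁅G, A⁆ = ⊥ := by
      rw [eq_bot_iff, Subgroup.commutator_le]
      intro g hg a ha
      rw [Subgroup.mem_bot, commutatorElement_eq_one_iff_mul_comm]
      exact hcommA g hg a ha
    have h1 : ⁅⁅G, B⁆, G⁆ = ⊥ := by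
      rw [eq_bot_iff]
      calc ⁅⁅G, B⁆, G⁆ ≤ ⁅A, G⁆ := Subgroup.commutator_mono hGBA le_rfl
        _ = ⁅G, A⁆ := Subgroup.commutator_comm _ _
        _ = ⊥ := hGAbot
    have h2 : ⁅⁅B, G⁆, G⁆ = ⊥ := by rw [Subgroup.commutator_comm B G]; exact h1
    have h3 : ⁅⁅G, G⁆, B⁆ = ⊥ := Subgroup.commutator_commutator_eq_bot_of_rotate h1 h2
    -- G is perfect
    have hGG : ⁅G, G⁆ = G := by
      have hcomm : _root_.commutator ↥G = ⊤ := by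
        rcases Subgroup.Normal.eq_bot_or_eq_top (G := ↥G) (_root_.commutator_def ↥G ▸ Subgroup.commutator_normal (⊤ : Subgroup ↥G) ⊤) with hc | hc
        · exfalso
          apply hGna
          intro a b
          have : ⁅a, b⁆ ∈ _root_.commutator ↥G :=
            Subgroup.commutator_mem_commutator (Subgroup.mem_top a) (Subgroup.mem_top b)
          rw [hc, Subgroup.mem_bot, commutatorElement_eq_one_iff_mul_comm] at this
          exact this
        · exact hc
      have : Subgroup.map G.subtype (_root_.commutator ↥G) = ⁅G, G⁆ := by
        rw [_root_.commutator_def, Subgroup.map_commutator, ← MonoidHom.range_eq_map,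
          Subgroup.range_subtype]
      rw [← this, hcomm, ← MonoidHom.range_eq_map, Subgroup.range_subtype]
    have hGBbot : ⁅G, B⁆ = ⊥ := by rw [hGG] at h3; exact h3
    have hcommB : ∀ g ∈ G, ∀ b ∈ B, g * b = b * g := by
      intro g hg b hb
      have : ⁅g, b⁆ ∈ (⊥ : Subgroup X) := hGBbot ▸ Subgroup.commutator_mem_commutator hg hb
      rwa [Subgroup.mem_bot, commutatorElement_eq_one_iff_mul_comm] at this
    refine hnd ⟨?_, hcommB⟩
    -- G ⊓ B = ⊥ since Z(G) = ⊥
    have hZ : Subgroup.center ↥G = ⊥ := by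
      rcases Subgroup.Normal.eq_bot_or_eq_top (inferInstance : (Subgroup.center ↥G).Normal) with hc | hc
      · exact hc
      · exfalso
        apply hGna
        intro a b
        exact Subgroup.mem_center_iff.mp (hc ▸ Subgroup.mem_top b) a
    rw [eq_bot_iff]
    intro x hx
    rcases hx with ⟨hxG, hxB⟩
    have : (⟨x, hxG⟩ : ↥G) ∈ Subgroup.center ↥G := by
      rw [Subgroup.mem_center_iff]
      intro g
      ext
      exact hcommB g.1 g.2 x hxB
    rw [hZ, Subgroup.mem_bot] at this
    have : x = 1 := congrArg Subtype.val this
    simpa [this] using Subgroup.one_mem _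
  -- assemble the embedding
  refine ⟨?_, ⟨(mulAutToGL r d).comp ((MulAut.congr e).toMonoidHom.comp φ), ?_⟩⟩
  swap
  · exact (mulAutToGL_injective r d).comp ((MulAut.congr e).injective.comp hφinj)
  -- d ≥ 2
  · set f := (mulAutToGL r d).comp ((MulAut.congr e).toMonoidHom.comp φ) with hf
    have hfinj : Function.Injective f :=
      (mulAutToGL_injective r d).comp ((MulAut.congr e).injective.comp hφinj)
    by_contra hd
    push_neg at hd
    obtain ⟨a, b, hab⟩ : ∃ a b : ↥G, a * b ≠ b * a := by
      by_contra hc; push_neg at hc; exact hGna hc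
    interval_cases d
    · -- d = 0 : GL is trivial
      apply hab
      apply hfinj
      have : ∀ u v : Matrix.GeneralLinearGroup (Fin 0) (ZMod r), u = v := by
        intro u v
        ext i j
        exact i.elim0
      exact this _ _
    · -- d = 1 : GL(1) is commutative
      apply hab
      apply hfinj
      have hcm : ∀ M N : Matrix (Fin 1) (Fin 1) (ZMod r), M * N = N * M := by
        intro M N
        ext i j
        simp [Matrix.mul_apply, Fin.sum_univ_one, Subsingleton.elim i 0, Subsingleton.elim j 0, mul_comm]
      rw [map_mul, map_mul]
      exact Units.ext (by simpa [Units.val_mul] using hcm (f a) (f b))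
end

section
/- The group 2.A₇ (the double cover of the alternating group A₇) has, up to conjugacy, a unique subgroup of index 7, and every subgroup of index 7 of 2.A₇ is isomorphic to 2.A₆. In particular, 2.A₇ has no subgroup of index 7 isomorphic to ℤ₂ × A₆. -/
set_option linter.unusedSectionVars false

open Equiv Equiv.Perm Subgroup

namespace DoubleCoverA7

lemma order_two_cases {G : Type*} [Group G] (h : Nat.card G = 2) :
    ∃ z : G, z ≠ 1 ∧ (∀ w : G, w = 1 ∨ w = z) ∧ z ^ 2 = 1 := by
  obtain ⟨x, y, hxy, hall⟩ := Nat.card_eq_two_iff.mp h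
  have hmem : ∀ w : G, w = x ∨ w = y := by
    intro w
    have : w ∈ ({x, y} : Set G) := by rw [hall]; trivial
    simpa using this
  have key : ∀ z : G, z ≠ 1 → (∀ w : G, w = 1 ∨ w = z) →
      ∃ z : G, z ≠ 1 ∧ (∀ w : G, w = 1 ∨ w = z) ∧ z ^ 2 = 1 := by
    intro z hz hallz
    refine ⟨z, hz, hallz, ?_⟩
    rcases hallz (z ^ 2) with h2 | h2
    · exact h2
    · exfalso; apply hz
      have hzz : z * z = z * 1 := by rw [mul_one, ← sq, h2]
      exact mul_left_cancel hzz
  rcases hmem 1 with h1 | h1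
  · refine key y (fun hy => hxy ?_) (fun w => ?_)
    · rw [← h1, hy]
    · rcases hmem w with hw | hw
      · exact Or.inl (hw.trans h1.symm)
      · exact Or.inr hw
  · refine key x (fun hx => hxy ?_) (fun w => ?_)
    · rw [hx, h1]
    · rcases hmem w with hw | hw
      · exact Or.inr hw
      · exact Or.inl (hw.trans h1.symm)


lemma two_mem_compl {α : Type*} [Fintype α] [DecidableEq α] (h : 4 ≤ Fintype.card α)
    (a b : α) : ∃ k l : α, k ≠ l ∧ k ≠ a ∧ k ≠ b ∧ l ≠ a ∧ l ≠ b := by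
  have hcard : 1 < (({a, b}ᶜ : Finset α)).card := by
    have h2 : ({a, b} : Finset α).card ≤ 2 :=
      (Finset.card_insert_le _ _).trans (by simp)
    rw [Finset.card_compl]
    omega
  obtain ⟨k, hk, l, hl, hkl⟩ := Finset.one_lt_card.mp hcard
  simp only [Finset.mem_compl, Finset.mem_insert, Finset.mem_singleton, not_or] at hk hl
  exact ⟨k, l, hkl, hk.1, hk.2, hl.1, hl.2⟩

lemma center_A6 : Subgroup.center (alternatingGroup (Fin 6)) = ⊥ := by
  rw [eq_bot_iff]
  intro σ hσ
  rw [Subgroup.mem_bot]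
  by_contra hne
  have h1 : (σ : Perm (Fin 6)) ≠ 1 := by
    intro h; exact hne (Subtype.ext h)
  obtain ⟨i, hi⟩ : ∃ i, (σ : Perm (Fin 6)) i ≠ i := by
    by_contra hc; push_neg at hc; exact h1 (Equiv.ext hc)
  set j := (σ : Perm (Fin 6)) i with hj
  obtain ⟨k, l, hkl, hki, hkj, hli, hlj⟩ :=
    two_mem_compl (by simp : 4 ≤ Fintype.card (Fin 6)) i j
  have hji : j ≠ i := hi
  set τp : Perm (Fin 6) := swap j k * swap k l with hτp
  have hτmem : τp ∈ alternatingGroup (Fin 6) := by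
    rw [Equiv.Perm.mem_alternatingGroup, hτp, map_mul,
      sign_swap (Ne.symm hkj), sign_swap hkl]
    norm_num
  have hτi : τp i = i := by
    rw [hτp, Perm.mul_apply, swap_apply_of_ne_of_ne (Ne.symm hki) (Ne.symm hli),
      swap_apply_of_ne_of_ne hji.symm (Ne.symm hki)]
  have hτj : τp j = k := by
    rw [hτp, Perm.mul_apply, swap_apply_of_ne_of_ne (Ne.symm hkj) (Ne.symm hlj), swap_apply_left]
  have hcomm := Subgroup.mem_center_iff.mp hσ ⟨τp, hτmem⟩
  have happ := congrArg (fun ρ : alternatingGroup (Fin 6) => (ρ : Perm (Fin 6)) i) hcomm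
  simp only [Subgroup.coe_mul, Perm.mul_apply] at happ
  rw [hτi, ← hj, hτj] at happ
  exact hkj happ

open scoped commutatorElement in
lemma perfect_A6 : commutator (alternatingGroup (Fin 6)) = ⊤ := by
  rw [eq_top_iff]
  intro σ _
  set C := commutator (alternatingGroup (Fin 6)) with hC
  -- three cycles (as elements of the subgroup) lie in C
  have h3 : ∀ g : alternatingGroup (Fin 6), IsThreeCycle (g : Perm (Fin 6)) → g ∈ C := by
    intro g hg
    have hg2 : IsThreeCycle ((g * g : alternatingGroup (Fin 6)) : Perm (Fin 6)) := by
      simpa using hg.isThreeCycle_sq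
    have hconj : IsConj g (g * g) :=
      alternatingGroup.isThreeCycle_isConj (by simp : 5 ≤ Nat.card (Fin 6)) hg hg2
    obtain ⟨c, hc⟩ := isConj_iff.mp hconj
    have hcg : ⁅c, g⁆ = g := by
      rw [commutatorElement_def, hc]; group
    rw [hC, _root_.commutator_def, ← hcg]
    exact Subgroup.commutator_mem_commutator (Subgroup.mem_top c) (Subgroup.mem_top g)
  -- the image of C in Perm contains all three cycles, hence the alternating group
  have hsub : Subgroup.closure {σ : Perm (Fin 6) | IsThreeCycle σ} ≤
      C.map (alternatingGroup (Fin 6)).subtype := by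
    refine Subgroup.closure_le _ |>.mpr ?_
    intro τ hτ
    have hτA : τ ∈ alternatingGroup (Fin 6) := hτ.mem_alternatingGroup
    exact ⟨⟨τ, hτA⟩, h3 _ hτ, rfl⟩
  rw [Equiv.Perm.closure_three_cycles_eq_alternating] at hsub
  obtain ⟨τ, hτC, hττ⟩ := hsub σ.2
  have : τ = σ := Subtype.ext hττ
  exact this ▸ hτC


lemma perm_inv_apply_self {α : Type*} (f : Perm α) (x : α) : f⁻¹ (f x) = x :=
  Perm.inv_eq_iff_eq.mpr rfl

/-- The stabilizer of a point, as a subgroup of the alternating group on 7 letters. -/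
def stab (a : Fin 7) : Subgroup (alternatingGroup (Fin 7)) where
  carrier := {σ | (σ : Perm (Fin 7)) a = a}
  mul_mem' := by
    intro σ τ hσ hτ
    simp only [Set.mem_setOf_eq, Subgroup.coe_mul, Perm.mul_apply] at *
    rw [hτ, hσ]
  one_mem' := rfl
  inv_mem' := by
    intro σ hσ
    simp only [Set.mem_setOf_eq] at *
    simp only [Subgroup.coe_inv]
    rw [← hσ]
    exact (perm_inv_apply_self _ _).trans hσ.symm

lemma mem_stab {a : Fin 7} {σ : alternatingGroup (Fin 7)} :
    σ ∈ stab a ↔ (σ : Perm (Fin 7)) a = a := Iff.rfl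

noncomputable def e6 (a : Fin 7) : Fin 6 ≃ {x : Fin 7 // x ≠ a} := by
  apply Fintype.equivOfCardEq
  rw [Fintype.card_fin, Fintype.card_subtype_compl]
  simp

/-- Extension of a permutation of the complement of `a` to `Fin 7`. -/
noncomputable def Φ (a : Fin 7) : Perm (Fin 6) →* Perm (Fin 7) :=
  Equiv.Perm.extendDomainHom (e6 a)

lemma Φ_fix (a : Fin 7) (π : Perm (Fin 6)) : (Φ a π) a = a :=
  Equiv.Perm.extendDomain_apply_not_subtype _ _ (by simp)

lemma Φ_sign (a : Fin 7) (π : Perm (Fin 6)) : sign (Φ a π) = sign π :=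
  Equiv.Perm.sign_extendDomain _ _

lemma Φ_surj (a : Fin 7) (σ : Perm (Fin 7)) (hσ : σ a = a) : ∃ π, Φ a π = σ := by
  have hiff : ∀ x : Fin 7, x ≠ a ↔ σ x ≠ a := by
    intro x
    constructor
    · intro hx hc
      exact hx (σ.injective (hc.trans hσ.symm))
    · intro hx hc
      subst hc; exact hx hσ
  set τ : Perm {x : Fin 7 // x ≠ a} := σ.subtypePerm (fun x => (hiff x).symm) with hτ
  refine ⟨((e6 a).trans τ).trans (e6 a).symm, ?_⟩
  refine Equiv.ext fun x => ?_
  by_cases hx : x = a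
  · subst hx
    rw [Φ_fix, hσ]
  · show Equiv.Perm.extendDomain (((e6 a).trans τ).trans (e6 a).symm) (e6 a) x = σ x
    rw [Equiv.Perm.extendDomain_apply_subtype _ (e6 a) hx]
    simp [τ, Equiv.Perm.subtypePerm]

/-- The isomorphism between `A₆` and the stabilizer of `a` in `A₇`. -/
noncomputable def stabIso (a : Fin 7) : alternatingGroup (Fin 6) ≃* stab a := by
  refine MulEquiv.ofBijective (MonoidHom.codRestrict
    (MonoidHom.codRestrict ((Φ a).comp (alternatingGroup (Fin 6)).subtype)
      (alternatingGroup (Fin 7)) ?_) (stab a) ?_) ⟨?_, ?_⟩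
  · intro π
    rw [Equiv.Perm.mem_alternatingGroup, MonoidHom.comp_apply, Φ_sign]
    exact π.2
  · intro π
    exact Φ_fix a π.1
  · intro π₁ π₂ h
    have h' : Φ a π₁.1 = Φ a π₂.1 := congrArg (fun x => x.1.1) h
    exact Subtype.ext (Equiv.Perm.extendDomainHom_injective (e6 a) h')
  · rintro ⟨⟨σ, hσA⟩, hσs⟩
    obtain ⟨π, hπ⟩ := Φ_surj a σ (by exact hσs)
    have hπA : π ∈ alternatingGroup (Fin 6) := by
      rw [Equiv.Perm.mem_alternatingGroup, ← Φ_sign a π, hπ]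
      exact hσA
    exact ⟨⟨π, hπA⟩, Subtype.ext (Subtype.ext hπ)⟩

lemma card_A6 : Nat.card (alternatingGroup (Fin 6)) = 360 := by
  have h := @two_mul_card_alternatingGroup (Fin 6) _ _ _
  rw [Fintype.card_perm, Fintype.card_fin] at h
  rw [Nat.card_eq_fintype_card]
  have h6 : Nat.factorial 6 = 720 := rfl
  omega

lemma card_A7 : Nat.card (alternatingGroup (Fin 7)) = 2520 := by
  have h := @two_mul_card_alternatingGroup (Fin 7) _ _ _
  rw [Fintype.card_perm, Fintype.card_fin] at h
  rw [Nat.card_eq_fintype_card]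
  have h7 : Nat.factorial 7 = 5040 := rfl
  omega

lemma card_stab (a : Fin 7) : Nat.card (stab a) = 360 := by
  rw [← Nat.card_congr (stabIso a).toEquiv]
  exact card_A6


lemma stab_conj (g : alternatingGroup (Fin 7)) (a : Fin 7) :
    (stab a).map (MulAut.conj g).toMonoidHom = stab ((g : Perm (Fin 7)) a) := by
  ext σ
  simp only [Subgroup.mem_map]
  constructor
  · rintro ⟨τ, hτ, rfl⟩
    rw [mem_stab] at hτ ⊢
    show ((g * τ * g⁻¹ : alternatingGroup (Fin 7)) : Perm (Fin 7)) _ = _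
    simp only [Subgroup.coe_mul, Subgroup.coe_inv, Perm.mul_apply]
    rw [perm_inv_apply_self, hτ]
  · intro hσ
    rw [mem_stab] at hσ
    refine ⟨g⁻¹ * σ * g, ?_, ?_⟩
    · rw [mem_stab]
      simp only [Subgroup.coe_mul, Subgroup.coe_inv, Perm.mul_apply]
      rw [hσ, perm_inv_apply_self]
    · show g * (g⁻¹ * σ * g) * g⁻¹ = σ
      group

lemma stab_transitive (a b : Fin 7) :
    ∃ g : alternatingGroup (Fin 7), (g : Perm (Fin 7)) a = b := by
  by_cases hab : a = b
  · exact ⟨1, by simp [hab]⟩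
  obtain ⟨c, d, hcd, hca, hcb, hda, hdb⟩ :=
    two_mem_compl (by simp : 4 ≤ Fintype.card (Fin 7)) a b
  refine ⟨⟨swap a b * swap c d, ?_⟩, ?_⟩
  · rw [Equiv.Perm.mem_alternatingGroup, map_mul, sign_swap hab, sign_swap hcd]
    norm_num
  · show (swap a b * swap c d) a = b
    rw [Perm.mul_apply, swap_apply_of_ne_of_ne (Ne.symm hca) (Ne.symm hda), swap_apply_left]

lemma no_small_invariant {M : Subgroup (alternatingGroup (Fin 7))}
    (hM : Nat.card M = 360) (S : Set (Fin 7))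
    (hinv : ∀ σ : M, ∀ x ∈ S, ((σ : alternatingGroup (Fin 7)) : Perm (Fin 7)) x ∈ S)
    (hm : S.ncard = 2 ∨ S.ncard = 3) : False := by
  classical
  have hiff : ∀ σ : M, ∀ x : Fin 7,
      x ∈ S ↔ ((σ : alternatingGroup (Fin 7)) : Perm (Fin 7)) x ∈ S := by
    intro σ x
    constructor
    · exact hinv σ x
    · intro hx
      have h2 := hinv σ⁻¹ _ hx
      simpa using h2
  have hiffc : ∀ σ : M, ∀ x : Fin 7,
      x ∈ Sᶜ ↔ ((σ : alternatingGroup (Fin 7)) : Perm (Fin 7)) x ∈ Sᶜ := by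
    intro σ x
    simp only [Set.mem_compl_iff]
    exact not_congr (hiff σ x)
  let F : ↥M → Perm ↥S × Perm ↥Sᶜ := fun σ =>
    (Equiv.Perm.subtypePerm _ (fun x => (hiff σ x).symm), Equiv.Perm.subtypePerm _ (fun x => (hiffc σ x).symm))
  have hFinj : Function.Injective F := by
    intro σ τ h
    have h1 := congrArg Prod.fst h
    have h2 := congrArg Prod.snd h
    simp only [F] at h1 h2
    apply Subtype.ext; apply Subtype.ext
    refine Equiv.ext fun x => ?_
    by_cases hx : x ∈ S
    · have := Equiv.ext_iff.mp h1 ⟨x, hx⟩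
      simpa [Equiv.Perm.subtypePerm_apply, Subtype.ext_iff] using this
    · have := Equiv.ext_iff.mp h2 ⟨x, hx⟩
      simpa [Equiv.Perm.subtypePerm_apply, Subtype.ext_iff] using this
  have hle := Nat.card_le_card_of_injective F hFinj
  letI : Fintype ↥S := Fintype.ofFinite _
  letI : Fintype ↥Sᶜ := Fintype.ofFinite _
  rw [hM, Nat.card_prod, Nat.card_eq_fintype_card, Nat.card_eq_fintype_card,
    Fintype.card_perm, Fintype.card_perm] at hle
  have eS : Fintype.card ↥S = S.ncard := by
    rw [← Nat.card_eq_fintype_card, Nat.card_coe_set_eq]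
  have eSc : Fintype.card ↥Sᶜ = Sᶜ.ncard := by
    rw [← Nat.card_eq_fintype_card, Nat.card_coe_set_eq]
  have hsum : S.ncard + Sᶜ.ncard = 7 := by
    rw [Set.ncard_add_ncard_compl]
    simp [Nat.card_eq_fintype_card]
  rw [eS, eSc] at hle
  rcases hm with hm | hm <;> rw [hm] at hle hsum
  · have h5 : Sᶜ.ncard = 5 := by omega
    rw [h5] at hle
    have hf : Nat.factorial 2 * Nat.factorial 5 = 240 := rfl
    omega
  · have h4 : Sᶜ.ncard = 4 := by omega
    rw [h4] at hle
    have hf : Nat.factorial 3 * Nat.factorial 4 = 144 := rfl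
    omega

lemma index7_eq_stab {M : Subgroup (alternatingGroup (Fin 7))} (hM : M.index = 7) :
    ∃ a, M = stab a := by
  classical
  have hcard : Nat.card M = 360 := by
    have h := M.card_mul_index
    rw [hM, card_A7] at h
    omega
  have hfix : ∃ a : Fin 7, ∀ σ : M, ((σ : alternatingGroup (Fin 7)) : Perm (Fin 7)) a = a := by
    by_contra hcon
    push_neg at hcon
    set O := MulAction.orbit ↥M (0 : Fin 7) with hO
    have hsmul : ∀ (σ : ↥M) (x : Fin 7),
        σ • x = ((σ : alternatingGroup (Fin 7)) : Perm (Fin 7)) x := fun _ _ => rfl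
    have hOinv : ∀ σ : ↥M, ∀ x ∈ O, ((σ : alternatingGroup (Fin 7)) : Perm (Fin 7)) x ∈ O := by
      intro σ x hx
      obtain ⟨τ, hτ⟩ := hx
      have hτ' : τ • (0 : Fin 7) = x := hτ
      rw [← hτ', ← hsmul, smul_smul]
      exact MulAction.mem_orbit _ _
    have hOcinv : ∀ σ : ↥M, ∀ x ∈ Oᶜ, ((σ : alternatingGroup (Fin 7)) : Perm (Fin 7)) x ∈ Oᶜ := by
      intro σ x hx hc
      apply hx
      have h2 := hOinv σ⁻¹ _ hc
      simpa using h2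
    letI : Fintype ↥M := Fintype.ofFinite _
    letI : Fintype ↥O := Fintype.ofFinite _
    letI : Fintype ↥(MulAction.stabilizer ↥M (0 : Fin 7)) := Fintype.ofFinite _
    have horb := MulAction.card_orbit_mul_card_stabilizer_eq_card_group ↥M (0 : Fin 7)
    have hdvd : O.ncard ∣ 360 := by
      refine ⟨Fintype.card (MulAction.stabilizer ↥M (0 : Fin 7)), ?_⟩
      rw [← hcard, Nat.card_eq_fintype_card, ← horb, ← Nat.card_coe_set_eq,
        Nat.card_eq_fintype_card]
    have h0O : (0 : Fin 7) ∈ O := MulAction.mem_orbit_self 0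
    have hpos : 1 ≤ O.ncard := by
      exact (Set.ncard_pos (Set.toFinite O)).mpr ⟨0, h0O⟩
    have hle7 : O.ncard ≤ 7 := by
      have := Set.ncard_le_ncard (Set.subset_univ O) Set.finite_univ
      rwa [Set.ncard_univ, Nat.card_eq_fintype_card, Fintype.card_fin] at this
    have hsum : O.ncard + Oᶜ.ncard = 7 := by
      rw [Set.ncard_add_ncard_compl]
      simp [Nat.card_eq_fintype_card]
    interval_cases hk : O.ncard
    · -- ncard = 1
      obtain ⟨x, hx⟩ := Set.ncard_eq_one.mp hk
      rw [hx] at h0O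
      obtain ⟨σ, hσ⟩ := hcon 0
      apply hσ
      have := hOinv σ 0 (by rw [hx]; exact h0O)
      rw [hx] at this
      simp only [Set.mem_singleton_iff] at this h0O
      rw [this, ← h0O]
    · exact no_small_invariant hcard O hOinv (Or.inl hk)
    · exact no_small_invariant hcard O hOinv (Or.inr hk)
    · exact no_small_invariant hcard Oᶜ hOcinv (Or.inr (by omega))
    · exact no_small_invariant hcard Oᶜ hOcinv (Or.inl (by omega))
    · -- ncard O = 6, complement is a fixed singleton
      have h1 : Oᶜ.ncard = 1 := by omega
      obtain ⟨x, hx⟩ := Set.ncard_eq_one.mp h1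
      obtain ⟨σ, hσ⟩ := hcon x
      apply hσ
      have hxO : x ∈ Oᶜ := by rw [hx]; exact rfl
      have := hOcinv σ x hxO
      rw [hx] at this
      simpa using this
    · -- ncard O = 7 impossible since 7 ∤ 360
      norm_num at hdvd
  obtain ⟨a, ha⟩ := hfix
  refine ⟨a, Subgroup.eq_of_le_of_card_ge ?_ ?_⟩
  · intro σ hσ
    exact mem_stab.mpr (ha ⟨σ, hσ⟩)
  · rw [card_stab, hcard]


section QSide

variable {Q : Type*} [Group Q] [Finite Q]

lemma center_le_of_index_seven (hZ : Nat.card (Subgroup.center Q) = 2)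
    (H : Subgroup Q) (h7 : H.index = 7) : Subgroup.center Q ≤ H := by
  intro x hx
  have hp : IsPGroup 2 (Subgroup.center Q) := IsPGroup.of_card (n := 1) (by rw [hZ]; norm_num)
  have hcard7 : Nat.card (Q ⧸ H) = 7 := by rw [← Subgroup.index_eq_card, h7]
  obtain ⟨qbar, hqbar⟩ := IsPGroup.nonempty_fixed_point_of_prime_not_dvd_card (α := Q ⧸ H) hp
    (by rw [hcard7]; norm_num)
  obtain ⟨q, rfl⟩ := QuotientGroup.mk_surjective qbar
  have hfix : (⟨x, hx⟩ : Subgroup.center Q) • (QuotientGroup.mk q : Q ⧸ H) =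
      QuotientGroup.mk q := hqbar ⟨x, hx⟩
  have hfix2 : ((x * q : Q) : Q ⧸ H) = (q : Q ⧸ H) := by
    have h1 : (⟨x, hx⟩ : Subgroup.center Q) • (QuotientGroup.mk q : Q ⧸ H) =
        x • (QuotientGroup.mk q : Q ⧸ H) := rfl
    rw [h1] at hfix
    rwa [MulAction.Quotient.smul_mk, smul_eq_mul] at hfix
  rw [QuotientGroup.eq] at hfix2
  have hc : (x * q)⁻¹ * q = x⁻¹ := by
    have hcen := Subgroup.mem_center_iff.mp (inv_mem hx) q
    rw [mul_inv_rev, mul_assoc]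
    calc q⁻¹ * (x⁻¹ * q) = q⁻¹ * (q * x⁻¹) := by rw [← hcen]
    _ = x⁻¹ := by rw [← mul_assoc, inv_mul_cancel, one_mul]
  rw [hc] at hfix2
  exact (inv_mem_iff).mp hfix2

lemma structure_of_index_seven (hperf : commutator Q = ⊤)
    (hZ : Nat.card (Subgroup.center Q) = 2)
    (f : Q →* alternatingGroup (Fin 7)) (hfsurj : Function.Surjective f)
    (hker : f.ker = Subgroup.center Q)
    (H : Subgroup Q) (h7 : H.index = 7) :
    commutator ↥H = ⊤ ∧ Nat.card (Subgroup.center ↥H) = 2 ∧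
      Nonempty ((↥H ⧸ Subgroup.center ↥H) ≃* alternatingGroup (Fin 6)) := by
  classical
  have hZle : Subgroup.center Q ≤ H := center_le_of_index_seven hZ H h7
  have hkerle : f.ker ≤ H := hker ▸ hZle
  have hM7 : (H.map f).index = 7 := by rw [Subgroup.index_map_eq (H := H) (f := f) hfsurj hkerle, h7]
  obtain ⟨a, hMa⟩ := index7_eq_stab hM7
  set r : ↥H →* alternatingGroup (Fin 7) := f.comp H.subtype with hr
  have hrange : r.range = stab a := by
    rw [hr, MonoidHom.range_comp, Subgroup.range_subtype, ← hMa]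
  set g' : ↥H →* ↥(stab a) := r.codRestrict (stab a)
    (fun x => hrange ▸ ⟨x, rfl⟩) with hg'
  set f6 : ↥H →* alternatingGroup (Fin 6) := (stabIso a).symm.toMonoidHom.comp g' with hf6
  have hg'coe : ∀ x : ↥H, (g' x : alternatingGroup (Fin 7)) = r x := fun x => rfl
  have hf6surj : Function.Surjective f6 := by
    intro y
    have hmem : ((stabIso a y : ↥(stab a)) : alternatingGroup (Fin 7)) ∈ r.range := by
      rw [hrange]; exact (stabIso a y).2
    obtain ⟨x, hx⟩ := hmem
    refine ⟨x, ?_⟩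
    have : g' x = stabIso a y := Subtype.ext (by rw [hg'coe, hx])
    rw [hf6, MonoidHom.comp_apply, this]
    simp
  have hker6 : f6.ker = (Subgroup.center Q).subgroupOf H := by
    ext x
    rw [MonoidHom.mem_ker, hf6, MonoidHom.comp_apply]
    rw [show ((stabIso a).symm.toMonoidHom (g' x) = 1) ↔ g' x = 1 from
      (stabIso a).symm.map_eq_one_iff]
    rw [Subgroup.mem_subgroupOf, ← hker, MonoidHom.mem_ker]
    constructor
    · intro h
      have := congrArg (Subtype.val) h
      rw [hg'coe] at this
      exact this
    · intro h
      exact Subtype.ext (by rw [hg'coe]; exact h)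
  -- the nontrivial central element
  obtain ⟨z₀, hz₀ne, hz₀all, hz₀sq⟩ := order_two_cases hZ
  set z : Q := (z₀ : Q) with hzdef
  have hzQ : z ∈ Subgroup.center Q := z₀.2
  have hzH : z ∈ H := hZle hzQ
  set zH : ↥H := ⟨z, hzH⟩ with hzH'
  have hz2 : z ^ 2 = 1 := by
    have := congrArg (Subtype.val) hz₀sq
    simpa using this
  set C := commutator ↥H with hC
  have hCsup : C ⊔ f6.ker = ⊤ := by
    have hmap : C.map f6 = ⊤ := by
      rw [hC, commutator_def, Subgroup.map_commutator,
        Subgroup.map_top_of_surjective f6 hf6surj, ← commutator_def, perfect_A6]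
    have := congrArg (Subgroup.comap f6) hmap
    rwa [Subgroup.comap_map_eq, Subgroup.comap_top] at this
  have hCtop : C = ⊤ := by
    by_cases hzC : zH ∈ C
    · have hkerleC : f6.ker ≤ C := by
        intro w hw
        rw [hker6, Subgroup.mem_subgroupOf] at hw
        rcases hz₀all ⟨(w : Q), hw⟩ with h | h
        · have hwq : (w : Q) = 1 := congrArg Subtype.val h
          have hw1 : w = 1 := Subtype.ext hwq
          rw [hw1]; exact C.one_mem
        · have hwq : (w : Q) = z := congrArg Subtype.val h
          have hw1 : w = zH := Subtype.ext hwq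
          rw [hw1]; exact hzC
      rw [← hCsup, sup_eq_left.mpr hkerleC]
    · exfalso
      haveI : H.FiniteIndex := ⟨by rw [h7]; norm_num⟩
      set ϕ : ↥H →* Abelianization ↥H := Abelianization.of with hϕ
      have key : ∀ (k : ℕ) (g₀ : Q), g₀⁻¹ * z ^ k * g₀ ∈ H → g₀⁻¹ * z ^ k * g₀ = z ^ k := by
        intro k g₀ _
        have hzk : z ^ k ∈ Subgroup.center Q := pow_mem hzQ k
        have hcen := Subgroup.mem_center_iff.mp hzk g₀
        rw [mul_assoc, ← hcen, ← mul_assoc, inv_mul_cancel, one_mul]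
      have ht := MonoidHom.transfer_eq_pow ϕ z key
      have hz7 : z ^ H.index = z := by
        rw [h7]
        calc z ^ 7 = (z ^ 2) ^ 3 * z := by rw [← pow_mul, ← pow_succ]
        _ = z := by rw [hz2, one_pow, one_mul]
      have htz : MonoidHom.transfer ϕ z = ϕ zH := by
        rw [ht]
        exact congrArg ϕ (Subtype.ext hz7)
      have htriv : MonoidHom.transfer ϕ z = 1 := by
        have hle := Abelianization.commutator_subset_ker (MonoidHom.transfer ϕ)
        rw [hperf] at hle
        exact hle (Subgroup.mem_top z)
      have hϕz : ϕ zH = 1 := by rw [← htz, htriv]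
      exact hzC ((QuotientGroup.eq_one_iff zH).mp hϕz)
  have hcent : Subgroup.center ↥H = f6.ker := by
    apply le_antisymm
    · intro c hc
      have hcen6 : f6 c ∈ Subgroup.center (alternatingGroup (Fin 6)) := by
        rw [Subgroup.mem_center_iff]
        intro y
        obtain ⟨x, rfl⟩ := hf6surj y
        rw [← map_mul, ← map_mul, Subgroup.mem_center_iff.mp hc x]
      rw [center_A6, Subgroup.mem_bot] at hcen6
      exact MonoidHom.mem_ker.mpr hcen6
    · intro w hw
      rw [hker6, Subgroup.mem_subgroupOf] at hw
      rw [Subgroup.mem_center_iff]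
      intro g
      exact Subtype.ext (Subgroup.mem_center_iff.mp hw (g : Q))
  refine ⟨hCtop, ?_, ?_⟩
  · rw [hcent, hker6, ← hZ]
    exact Nat.card_congr (Subgroup.subgroupOfEquivOfLe hZle).toEquiv
  · exact ⟨(QuotientGroup.quotientMulEquivOfEq (hcent.trans hker6)).trans
      ((QuotientGroup.quotientMulEquivOfEq hker6.symm).trans
        (QuotientGroup.quotientKerEquivOfSurjective f6 hf6surj))⟩

lemma conj_of_index_seven (hZ : Nat.card (Subgroup.center Q) = 2)
    (f : Q →* alternatingGroup (Fin 7)) (hfsurj : Function.Surjective f)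
    (hker : f.ker = Subgroup.center Q)
    (H₁ H₂ : Subgroup Q) (h1 : H₁.index = 7) (h2 : H₂.index = 7) :
    ∃ q : Q, Subgroup.map (MulAut.conj q).toMonoidHom H₁ = H₂ := by
  have hZle1 : Subgroup.center Q ≤ H₁ := center_le_of_index_seven hZ H₁ h1
  have hZle2 : Subgroup.center Q ≤ H₂ := center_le_of_index_seven hZ H₂ h2
  obtain ⟨a₁, hM1⟩ := index7_eq_stab
    (show (H₁.map f).index = 7 by
      rw [Subgroup.index_map_eq (H := H₁) (f := f) hfsurj (hker ▸ hZle1), h1])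
  obtain ⟨a₂, hM2⟩ := index7_eq_stab
    (show (H₂.map f).index = 7 by
      rw [Subgroup.index_map_eq (H := H₂) (f := f) hfsurj (hker ▸ hZle2), h2])
  obtain ⟨g, hg⟩ := stab_transitive a₁ a₂
  obtain ⟨q, hq⟩ := hfsurj g
  refine ⟨q, ?_⟩
  have hmaps : (H₁.map (MulAut.conj q).toMonoidHom).map f = H₂.map f := by
    calc (H₁.map (MulAut.conj q).toMonoidHom).map f
        = H₁.map (f.comp (MulAut.conj q).toMonoidHom) := Subgroup.map_map _ _ _
    _ = H₁.map ((MulAut.conj g).toMonoidHom.comp f) := by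
        congr 1
        ext x
        simp only [MonoidHom.comp_apply, MulEquiv.coe_toMonoidHom, MulAut.conj_apply,
          map_mul, map_inv, hq]
    _ = (H₁.map f).map (MulAut.conj g).toMonoidHom := (Subgroup.map_map _ _ _).symm
    _ = stab a₂ := by rw [hM1, stab_conj, hg]
    _ = H₂.map f := hM2.symm
  have hkerle1 : f.ker ≤ H₁.map (MulAut.conj q).toMonoidHom := by
    rw [hker]
    intro w hw
    refine ⟨w, hZle1 hw, ?_⟩
    show q * w * q⁻¹ = w
    rw [Subgroup.mem_center_iff.mp hw q, mul_assoc, mul_inv_cancel, mul_one]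
  have := congrArg (Subgroup.comap f) hmaps
  rwa [Subgroup.comap_map_eq, Subgroup.comap_map_eq, sup_eq_left.mpr hkerle1,
    sup_eq_left.mpr (hker ▸ hZle2)] at this

end QSide

/-- The main theorem. -/
theorem main {Q : Type*} [Group Q] [Finite Q]
    (hperf : commutator Q = ⊤)
    (hZ : Nat.card (Subgroup.center Q) = 2)
    (hquot : Nonempty ((Q ⧸ Subgroup.center Q) ≃* alternatingGroup (Fin 7))) :
    (∀ H₁ H₂ : Subgroup Q, H₁.index = 7 → H₂.index = 7 →
      ∃ q : Q, Subgroup.map (MulAut.conj q).toMonoidHom H₁ = H₂) ∧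
    (∀ H : Subgroup Q, H.index = 7 →
      commutator ↥H = ⊤ ∧ Nat.card (Subgroup.center ↥H) = 2 ∧
      Nonempty ((↥H ⧸ Subgroup.center ↥H) ≃* alternatingGroup (Fin 6))) ∧
    (∀ H : Subgroup Q, H.index = 7 →
      ¬ Nonempty (↥H ≃* (Multiplicative (ZMod 2) × alternatingGroup (Fin 6)))) := by
  obtain ⟨e⟩ := hquot
  set f : Q →* alternatingGroup (Fin 7) :=
    e.toMonoidHom.comp (QuotientGroup.mk' (Subgroup.center Q)) with hf
  have hfsurj : Function.Surjective f :=
    e.surjective.comp (QuotientGroup.mk'_surjective (Subgroup.center Q))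
  have hker : f.ker = Subgroup.center Q := by
    ext x
    rw [MonoidHom.mem_ker, hf, MonoidHom.comp_apply]
    rw [show (e.toMonoidHom (QuotientGroup.mk' (Subgroup.center Q) x) = 1) ↔
        (QuotientGroup.mk' (Subgroup.center Q) x = 1) from e.map_eq_one_iff]
    exact QuotientGroup.eq_one_iff x
  have hB : ∀ H : Subgroup Q, H.index = 7 →
      commutator ↥H = ⊤ ∧ Nat.card (Subgroup.center ↥H) = 2 ∧
      Nonempty ((↥H ⧸ Subgroup.center ↥H) ≃* alternatingGroup (Fin 6)) :=
    fun H h7 => structure_of_index_seven hperf hZ f hfsurj hker H h7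
  refine ⟨fun H₁ H₂ h1 h2 => conj_of_index_seven hZ f hfsurj hker H₁ H₂ h1 h2, hB, ?_⟩
  intro H h7 hiso
  obtain ⟨d⟩ := hiso
  have hCtop := (hB H h7).1
  set p : Multiplicative (ZMod 2) × alternatingGroup (Fin 6) →* Multiplicative (ZMod 2) :=
    MonoidHom.fst _ _ with hp
  have hcomm := Abelianization.commutator_subset_ker (p.comp d.toMonoidHom)
  rw [hCtop] at hcomm
  have h1 : (p.comp d.toMonoidHom) (d.symm (Multiplicative.ofAdd 1, 1)) = 1 :=
    hcomm (Subgroup.mem_top _)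
  rw [MonoidHom.comp_apply] at h1
  have h2 : d.toMonoidHom (d.symm (Multiplicative.ofAdd 1, 1)) =
      (Multiplicative.ofAdd 1, 1) := d.apply_symm_apply _
  rw [h2] at h1
  have : (Multiplicative.ofAdd (1 : ZMod 2)) = 1 := h1
  exact absurd this (by decide)


end DoubleCoverA7

/-- The double cover `2.A₇` (a finite perfect group `Q` with `|Z(Q)| = 2` and
`Q/Z(Q) ≅ A₇`) has, up to conjugacy, a unique subgroup of index 7; every such
subgroup is isomorphic to `2.A₆` (perfect, centre of order 2, central quotient
`A₆`); in particular no subgroup of index 7 is isomorphic to `ℤ₂ × A₆`. -/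
theorem double_cover_A7_index_seven_subgroups {Q : Type*} [Group Q] [Finite Q]
    (hperf : commutator Q = ⊤)
    (hZ : Nat.card (Subgroup.center Q) = 2)
    (hquot : Nonempty ((Q ⧸ Subgroup.center Q) ≃* alternatingGroup (Fin 7))) :
    (∀ H₁ H₂ : Subgroup Q, H₁.index = 7 → H₂.index = 7 →
      ∃ q : Q, Subgroup.map (MulAut.conj q).toMonoidHom H₁ = H₂) ∧
    (∀ H : Subgroup Q, H.index = 7 →
      commutator ↥H = ⊤ ∧ Nat.card (Subgroup.center ↥H) = 2 ∧
      Nonempty ((↥H ⧸ Subgroup.center ↥H) ≃* alternatingGroup (Fin 6))) ∧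
    (∀ H : Subgroup Q, H.index = 7 →
      ¬ Nonempty (↥H ≃* (Multiplicative (ZMod 2) × alternatingGroup (Fin 6)))) := by
  exact DoubleCoverA7.main hperf hZ hquot
end

section
/- For every n ≥ 7, every subgroup of index n of the double cover 2.Aₙ of the alternating group Aₙ is isomorphic to 2.A_{n-1}; consequently 2.Aₙ has no subgroup of index n isomorphic to A_{n-1} × ℤ₂. -/
open Equiv Equiv.Perm Subgroup

namespace DCover

set_option linter.unusedSectionVars false

variable {α : Type*} [DecidableEq α] [Fintype α]

/-- The subgroup of permutations fixing every point that does not satisfy `p`. -/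
def fixSub (p : α → Prop) [DecidablePred p] : Subgroup (Perm α) where
  carrier := {σ | ∀ x, ¬ p x → σ x = x}
  one_mem' := fun _ _ => rfl
  mul_mem' := by
    intro a b ha hb x hx
    simp only [Perm.mul_apply, hb x hx, ha x hx]
  inv_mem' := by
    intro a ha x hx
    exact Perm.inv_eq_iff_eq.mpr (ha x hx).symm

lemma mem_fixSub {p : α → Prop} [DecidablePred p] {σ : Perm α} :
    σ ∈ fixSub p ↔ ∀ x, ¬ p x → σ x = x := Iff.rfl

lemma mem_fixSub_ne {a : α} {σ : Perm α} :
    σ ∈ fixSub (· ≠ a) ↔ σ a = a := by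
  constructor
  · intro h; exact h a (by simp)
  · intro h x hx
    simp only [ne_eq, not_not] at hx
    subst hx; exact h

lemma fixSub_iff {p : α → Prop} [DecidablePred p] {σ : Perm α}
    (hσ : ∀ x, ¬ p x → σ x = x) (x : α) : p x ↔ p (σ x) := by
  constructor
  · intro hx
    by_contra h
    have h2 : σ (σ x) = σ x := hσ _ h
    have h3 : σ x = x := σ.injective h2
    rw [h3] at h; exact h hx
  · intro hx
    by_contra h
    rw [hσ x h] at hx; exact h hx

/-- Transport of alternating groups along an equivalence of types. -/
def altIso {β : Type*} [DecidableEq β] [Fintype β] (e : α ≃ β) :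
    alternatingGroup α ≃* alternatingGroup β where
  toFun σ := ⟨e.permCongr σ, by
    rw [mem_alternatingGroup, sign_permCongr]; exact σ.2⟩
  invFun τ := ⟨e.symm.permCongr τ, by
    rw [mem_alternatingGroup, sign_permCongr]; exact τ.2⟩
  left_inv σ := by
    ext x
    simp [Equiv.permCongr_apply]
  right_inv τ := by
    ext x
    simp [Equiv.permCongr_apply]
  map_mul' σ τ := by
    ext x
    simp [Equiv.permCongr_apply, Perm.mul_apply]

/-- The subgroup of even permutations fixing the complement of `p` is isomorphic to the
alternating group of the subtype. -/
noncomputable def subIso (p : α → Prop) [DecidablePred p] :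
    ↥(alternatingGroup α ⊓ fixSub p) ≃* alternatingGroup {x // p x} where
  toFun σ := ⟨(σ : Perm α).subtypePerm (fun x => (fixSub_iff σ.2.2 x).symm), by
    rw [mem_alternatingGroup]
    rw [sign_subtypePerm _ _ (fun x hx => by_contra fun h => hx (σ.2.2 x h))]
    exact σ.2.1⟩
  invFun τ := ⟨ofSubtype (τ : Perm {x // p x}), Subgroup.mem_inf.mpr
    ⟨by rw [mem_alternatingGroup, sign_ofSubtype]; exact τ.2,
     fun x hx => ofSubtype_apply_of_not_mem _ hx⟩⟩
  left_inv σ := by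
    apply Subtype.ext
    dsimp only
    exact ofSubtype_subtypePerm _ (fun x hx => by_contra fun h => hx (σ.2.2 x h))
  right_inv τ := by
    apply Subtype.ext
    dsimp only
    exact subtypePerm_ofSubtype _
  map_mul' σ τ := by
    apply Subtype.ext
    exact Equiv.ext fun x => rfl


set_option linter.unusedSectionVars false

variable {α : Type*} [DecidableEq α] [Fintype α]

/-- An explicit 3-cycle `a ↦ b ↦ c ↦ a`. -/
def cyc (a b c : α) : Perm α := swap a b * swap b c

lemma cyc_app1 {a b c : α} (hab : a ≠ b) (hac : a ≠ c) : cyc a b c a = b := by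
  simp only [cyc, Perm.mul_apply, swap_apply_of_ne_of_ne hab hac, swap_apply_left]

lemma cyc_app2 {a b c : α} (hca : c ≠ a) (hcb : c ≠ b) : cyc a b c b = c := by
  simp only [cyc, Perm.mul_apply, swap_apply_left, swap_apply_of_ne_of_ne hca hcb]

lemma cyc_app3 {a b c : α} : cyc a b c c = a := by
  simp only [cyc, Perm.mul_apply, swap_apply_right]

lemma cyc_fix {a b c x : α} (h1 : x ≠ a) (h2 : x ≠ b) (h3 : x ≠ c) : cyc a b c x = x := by
  simp only [cyc, Perm.mul_apply, swap_apply_of_ne_of_ne h2 h3, swap_apply_of_ne_of_ne h1 h2]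

lemma cyc_mem {a b c : α} (hab : a ≠ b) (hbc : b ≠ c) : cyc a b c ∈ alternatingGroup α := by
  rw [mem_alternatingGroup, cyc, map_mul, sign_swap hab, sign_swap hbc]
  decide

lemma exists_notin (s : Finset α) (h : s.card < Fintype.card α) : ∃ x, x ∉ s := by
  by_contra hc
  push_neg at hc
  have h2 : (Finset.univ : Finset α) ⊆ s := fun x _ => hc x
  have := Finset.card_le_card h2
  rw [Finset.card_univ] at this
  omega

lemma card_insert_le' (a : α) (s : Finset α) (n : ℕ) (h : s.card ≤ n) :
    (insert a s).card ≤ n + 1 :=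
  (Finset.card_insert_le a s).trans (by omega)

theorem altnorm (h5 : 5 ≤ Fintype.card α) (N : Subgroup (Perm α))
    (hle : N ≤ alternatingGroup α)
    (hconj : ∀ σ ∈ alternatingGroup α, ∀ x ∈ N, σ * x * σ⁻¹ ∈ N) :
    N = ⊥ ∨ alternatingGroup α ≤ N := by
  by_cases hbot : N = ⊥
  · exact Or.inl hbot
  right
  obtain ⟨g, hgN, hg1⟩ : ∃ g, g ∈ N ∧ g ≠ 1 := by
    by_contra hcc
    push_neg at hcc
    exact hbot (eq_bot_iff.mpr fun x hx => Subgroup.mem_bot.mpr (hcc x hx))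
  obtain ⟨a, ha⟩ : ∃ a, g a ≠ a := by
    by_contra hcc
    push_neg at hcc
    exact hg1 (Equiv.ext hcc)
  -- Step 1 : a nontrivial element of N supported on at most 5 points
  obtain ⟨h, T, hhN, hh1, hT5, hhfix⟩ :
      ∃ (h : Perm α) (T : Finset α), h ∈ N ∧ h ≠ 1 ∧ T.card ≤ 5 ∧ ∀ y ∉ T, h y = y := by
    set b := g a with hbdef
    have hba : b ≠ a := ha
    by_cases hgb : g b = a
    · -- g swaps a and b
      obtain ⟨x, hx⟩ := exists_notin ({a, b} : Finset α)
        (lt_of_lt_of_le (by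
          have := card_insert_le' a ({b} : Finset α) 1 (by simp)
          omega) h5)
      have hxa : x ≠ a := by intro hh; exact hx (by simp [hh])
      have hxb : x ≠ b := by intro hh; exact hx (by simp [hh])
      set σ := cyc a b x with hσ
      have hσmem : σ ∈ alternatingGroup α := cyc_mem hba.symm (Ne.symm hxb)
      refine ⟨σ * g * σ⁻¹ * g⁻¹, {a, b, x, g x}, ?_, ?_, ?_, ?_⟩
      · exact mul_mem (hconj σ hσmem g hgN) (inv_mem hgN)
      · -- value at a is x
        intro heq
        have hval : (σ * g * σ⁻¹ * g⁻¹) a = x := by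
          have h1 : g⁻¹ a = b := Perm.inv_eq_iff_eq.mpr hgb.symm
          have h2 : σ⁻¹ b = a := Perm.inv_eq_iff_eq.mpr (cyc_app1 hba.symm hxa.symm).symm
          simp only [Perm.mul_apply, h1, h2]
          rw [← hbdef]
          exact cyc_app2 hxa hxb
        rw [heq] at hval
        simp at hval
        exact hxa hval.symm
      · have := card_insert_le' a ({b, x, g x} : Finset α) 3
          (card_insert_le' b ({x, g x} : Finset α) 2
            (card_insert_le' x ({g x} : Finset α) 1 (by simp)))
        omega
      · intro y hy
        simp only [Finset.mem_insert, Finset.mem_singleton, not_or] at hy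
        obtain ⟨hy1, hy2, hy3, hy4⟩ := hy
        have hu1 : g⁻¹ y ≠ a := by
          intro hh; rw [Perm.inv_eq_iff_eq] at hh; exact hy2 (by rw [hh, hbdef])
        have hu2 : g⁻¹ y ≠ b := by
          intro hh; rw [Perm.inv_eq_iff_eq] at hh; exact hy1 (by rw [hh, hgb])
        have hu3 : g⁻¹ y ≠ x := by
          intro hh; rw [Perm.inv_eq_iff_eq] at hh; exact hy4 (by rw [hh])
        have hfix : σ⁻¹ (g⁻¹ y) = g⁻¹ y :=
          Perm.inv_eq_iff_eq.mpr (cyc_fix hu1 hu2 hu3).symm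
        simp only [Perm.mul_apply, hfix, (fun y => (eq_symm_apply g).mp rfl : ∀ y, g (g⁻¹ y) = y)]
        exact cyc_fix hy1 hy2 hy3
    · -- g b ≠ a
      have hgba : g b ≠ b := by
        intro hh
        exact hba (g.injective (by rw [hh, hbdef]))
      obtain ⟨x, hx⟩ := exists_notin ({a, b, g⁻¹ a, g b} : Finset α)
        (lt_of_lt_of_le (by
          have := card_insert_le' a ({b, g⁻¹ a, g b} : Finset α) 3
            (card_insert_le' b ({g⁻¹ a, g b} : Finset α) 2
              (card_insert_le' (g⁻¹ a) ({g b} : Finset α) 1 (by simp)))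
          omega) h5)
      simp only [Finset.mem_insert, Finset.mem_singleton, not_or] at hx
      obtain ⟨hxa, hxb, hxga, hxgb⟩ := hx
      set σ := cyc a x b with hσ
      have hσmem : σ ∈ alternatingGroup α := cyc_mem (Ne.symm hxa) hxb
      refine ⟨σ * g * σ⁻¹ * g⁻¹, {a, x, b, g x, g b}, ?_, ?_, ?_, ?_⟩
      · exact mul_mem (hconj σ hσmem g hgN) (inv_mem hgN)
      · intro heq
        have hu1 : g⁻¹ a ≠ a := by
          intro hh; rw [Perm.inv_eq_iff_eq] at hh; exact ha hh.symm
        have hu2 : g⁻¹ a ≠ x := by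
          intro hh; exact hxga hh.symm
        have hu3 : g⁻¹ a ≠ b := by
          intro hh; rw [Perm.inv_eq_iff_eq] at hh; exact hgb hh.symm
        have hval : (σ * g * σ⁻¹ * g⁻¹) a = x := by
          have hfix : σ⁻¹ (g⁻¹ a) = g⁻¹ a :=
            Perm.inv_eq_iff_eq.mpr (cyc_fix hu1 hu2 hu3).symm
          simp only [Perm.mul_apply, hfix, (fun y => (eq_symm_apply g).mp rfl : ∀ y, g (g⁻¹ y) = y)]
          exact cyc_app1 (Ne.symm hxa) hba.symm
        rw [heq] at hval
        simp at hval
        exact hxa hval.symm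
      · have := card_insert_le' a ({x, b, g x, g b} : Finset α) 4
          (card_insert_le' x ({b, g x, g b} : Finset α) 3
            (card_insert_le' b ({g x, g b} : Finset α) 2
              (card_insert_le' (g x) ({g b} : Finset α) 1 (by simp))))
        omega
      · intro y hy
        simp only [Finset.mem_insert, Finset.mem_singleton, not_or] at hy
        obtain ⟨hy1, hy2, hy3, hy4, hy5⟩ := hy
        have hu1 : g⁻¹ y ≠ a := by
          intro hh; rw [Perm.inv_eq_iff_eq] at hh; exact hy3 (by rw [hh, hbdef])
        have hu2 : g⁻¹ y ≠ x := by
          intro hh; rw [Perm.inv_eq_iff_eq] at hh; exact hy4 (by rw [hh])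
        have hu3 : g⁻¹ y ≠ b := by
          intro hh; rw [Perm.inv_eq_iff_eq] at hh; exact hy5 (by rw [hh])
        have hfix : σ⁻¹ (g⁻¹ y) = g⁻¹ y :=
          Perm.inv_eq_iff_eq.mpr (cyc_fix hu1 hu2 hu3).symm
        simp only [Perm.mul_apply, hfix, (fun y => (eq_symm_apply g).mp rfl : ∀ y, g (g⁻¹ y) = y)]
        exact cyc_fix hy1 hy2 hy3
  -- Step 2 : a 5-element superset
  obtain ⟨S, hTS, -, hS5⟩ := Finset.exists_subsuperset_card_eq (Finset.subset_univ T) hT5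
    (by rw [Finset.card_univ]; exact h5)
  -- Step 3 : transport to A₅ and use its simplicity
  set W := alternatingGroup α ⊓ fixSub (· ∈ S) with hWdef
  letI instFS : Fintype {x // x ∈ S} := Subtype.fintype _
  let ee : ↥W ≃* alternatingGroup (Fin 5) :=
    (subIso (· ∈ S)).trans (altIso (S.equivFinOfCardEq hS5))
  have hWle : W ≤ alternatingGroup α := inf_le_left
  set NS := N.subgroupOf W with hNSdef
  have hNSnormal : NS.Normal := by
    constructor
    intro x hx w
    rw [Subgroup.mem_subgroupOf] at hx ⊢
    push_cast
    exact hconj _ (hWle w.2) _ hx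
  have hNS' : (NS.map ee.toMonoidHom).Normal :=
    Subgroup.Normal.map hNSnormal ee.toMonoidHom ee.surjective
  have hWN : W ≤ N := by
    rcases IsSimpleGroup.eq_bot_or_eq_top_of_normal (NS.map ee.toMonoidHom) hNS' with hc | hc
    · exfalso
      rw [Subgroup.map_eq_bot_iff_of_injective _ ee.injective] at hc
      have hhW : h ∈ W := by
        refine Subgroup.mem_inf.mpr ⟨hle hhN, fun x hx => hhfix x (fun hmem => hx (hTS hmem))⟩
      have : (⟨h, hhW⟩ : ↥W) ∈ NS := by rw [Subgroup.mem_subgroupOf]; exact hhN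
      rw [hc, Subgroup.mem_bot] at this
      exact hh1 (by simpa using congrArg Subtype.val this)
    · intro w hw
      have : (⟨w, hw⟩ : ↥W) ∈ NS := by
        have : NS = ⊤ := by
          have hinj : Function.Injective ⇑ee.toMonoidHom := ee.injective
          apply Subgroup.map_injective hinj
          rw [hc, Subgroup.map_top_of_surjective _ ee.surjective]
        rw [this]
        exact Subgroup.mem_top _
      rwa [Subgroup.mem_subgroupOf] at this
  -- Step 4 : a 3-cycle in N
  obtain ⟨t, htS, ht3⟩ := Finset.exists_subset_card_eq (s := S) (n := 3) (by omega)
  rw [Finset.card_eq_three] at ht3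
  obtain ⟨p, q, r, hpq, hpr, hqr, rfl⟩ := ht3
  have hpS : p ∈ S := htS (by simp)
  have hqS : q ∈ S := htS (by simp)
  have hrS : r ∈ S := htS (by simp)
  have hf3 : IsThreeCycle (swap p q * swap p r) := isThreeCycle_swap_mul_swap_same hpq hpr hqr
  have hfW : swap p q * swap p r ∈ W := by
    refine Subgroup.mem_inf.mpr ⟨hf3.mem_alternatingGroup, fun x hx => ?_⟩
    have hxp : x ≠ p := fun hh => hx (hh ▸ hpS)
    have hxq : x ≠ q := fun hh => hx (hh ▸ hqS)
    have hxr : x ≠ r := fun hh => hx (hh ▸ hrS)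
    simp only [Perm.mul_apply, swap_apply_of_ne_of_ne hxp hxr,
      swap_apply_of_ne_of_ne hxp hxq]
  have hfN : swap p q * swap p r ∈ N := hWN hfW
  -- Step 5 : conclude via the normal closure of a 3-cycle
  have hNalt : (N.subgroupOf (alternatingGroup α)).Normal := by
    constructor
    intro x hx w
    rw [Subgroup.mem_subgroupOf] at hx ⊢
    push_cast
    exact hconj _ w.2 _ hx
  have htop : N.subgroupOf (alternatingGroup α) = ⊤ := by
    rw [eq_top_iff, ← hf3.alternating_normalClosure (by rwa [Nat.card_eq_fintype_card])]
    haveI := hNalt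
    apply Subgroup.normalClosure_le_normal
    intro x hx
    rw [Set.mem_singleton_iff] at hx
    subst hx
    exact Subgroup.mem_subgroupOf.mpr hfN
  intro x hx
  have : (⟨x, hx⟩ : ↥(alternatingGroup α)) ∈ N.subgroupOf (alternatingGroup α) := by
    rw [htop]; exact Subgroup.mem_top _
  rwa [Subgroup.mem_subgroupOf] at this

end DCover

section Chunk3

open Equiv Equiv.Perm Subgroup
open scoped commutatorElement

namespace DCover

variable {α : Type*} [DecidableEq α] [Fintype α]

lemma commutator_top_of_mulEquiv {G G' : Type*} [Group G] [Group G'] (e : G ≃* G')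
    (h : commutator G = ⊤) : commutator G' = ⊤ := by
  have h1 : Subgroup.map e.toMonoidHom ⊤ = ⊤ := Subgroup.map_top_of_surjective _ e.surjective
  have h2 : Subgroup.map e.toMonoidHom (commutator G) = commutator G' := by
    rw [commutator_def, commutator_def, Subgroup.map_commutator, h1]
  rw [← h2, h, h1]

lemma subgroup_eq_of_le_of_card_le {G : Type*} [Group G] {A B : Subgroup G} [Finite G]
    (hle : A ≤ B) (hc : Nat.card B ≤ Nat.card A) : A = B := by
  apply SetLike.coe_injective
  apply Set.eq_of_subset_of_ncard_le hle ?_ (Set.toFinite _)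
  rw [← Nat.card_coe_set_eq, ← Nat.card_coe_set_eq]
  exact hc

theorem alt_perfect (h5 : 5 ≤ Fintype.card α) : commutator ↥(alternatingGroup α) = ⊤ := by
  set A := alternatingGroup α
  set D := Subgroup.map A.subtype (commutator ↥A) with hD
  have hle : D ≤ A := by
    rintro x ⟨y, -, rfl⟩
    exact y.2
  have hconj : ∀ σ ∈ A, ∀ x ∈ D, σ * x * σ⁻¹ ∈ D := by
    rintro σ hσ x ⟨y, hy, rfl⟩
    refine ⟨(⟨σ, hσ⟩ : ↥A) * y * (⟨σ, hσ⟩ : ↥A)⁻¹, ?_, rfl⟩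
    exact (Subgroup.commutator_normal ⊤ ⊤).conj_mem y hy _
  have hDbot : D ≠ ⊥ := by
    -- two non-commuting 3-cycles
    obtain ⟨t, -, ht3⟩ := Finset.exists_subset_card_eq (s := (Finset.univ : Finset α)) (n := 3)
      (by rw [Finset.card_univ]; omega)
    rw [Finset.card_eq_three] at ht3
    obtain ⟨a, b, c, hab, hac, hbc, rfl⟩ := ht3
    obtain ⟨d, hd⟩ := exists_notin ({a, b, c} : Finset α)
      (lt_of_lt_of_le (by
        have := card_insert_le' a ({b, c} : Finset α) 2
          (card_insert_le' b ({c} : Finset α) 1 (by simp))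
        omega) h5)
    simp only [Finset.mem_insert, Finset.mem_singleton, not_or] at hd
    obtain ⟨hda, hdb, hdc⟩ := hd
    have h1 : cyc a b c ∈ A := cyc_mem hab hbc
    have h2 : cyc a b d ∈ A := cyc_mem hab (Ne.symm hdb)
    have hne : cyc a b c * cyc a b d ≠ cyc a b d * cyc a b c := by
      intro hcd
      have := congrArg (fun σ : Perm α => σ a) hcd
      simp only [Perm.mul_apply] at this
      rw [cyc_app1 hab (Ne.symm hda), cyc_app2 hac.symm hbc.symm,
        cyc_app1 hab hac, cyc_app2 hda hdb] at this
      exact hdc this.symm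
    intro hbot
    have hmem : (⁅cyc a b c, cyc a b d⁆ : Perm α) ∈ D := by
      refine ⟨⁅(⟨_, h1⟩ : ↥A), (⟨_, h2⟩ : ↥A)⁆, commutator_mem_commutator (mem_top _) (mem_top _), rfl⟩
    rw [hbot, Subgroup.mem_bot] at hmem
    rw [commutatorElement_eq_one_iff_mul_comm] at hmem
    exact hne hmem
  rcases altnorm h5 D hle hconj with hc | hc
  · exact absurd hc hDbot
  · have hmap : Subgroup.map A.subtype (commutator ↥A) = Subgroup.map A.subtype ⊤ := by
      have : Subgroup.map A.subtype ⊤ = A := by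
        rw [← MonoidHom.range_eq_map, Subgroup.range_subtype]
      rw [this]
      exact le_antisymm hle hc
    exact Subgroup.map_injective A.subtype_injective hmap

lemma perfW (p : α → Prop) [DecidablePred p] (h5 : 5 ≤ Fintype.card {x // p x}) :
    commutator ↥(alternatingGroup α ⊓ fixSub p) = ⊤ :=
  commutator_top_of_mulEquiv (subIso p).symm (alt_perfect h5)

lemma centralizer_fix (h6 : 6 ≤ Fintype.card α) (b : α) (σ : Perm α)
    (hσ : ∀ τ ∈ alternatingGroup α ⊓ fixSub (· ≠ b), σ * τ = τ * σ) : σ = 1 := by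
  have key : ∀ t, t ≠ b → σ t = t := by
    intro t htb
    obtain ⟨x1, hx1⟩ := exists_notin ({b, t} : Finset α) (by
      have := card_insert_le' b {t} 1 (by simp); omega)
    obtain ⟨x2, hx2⟩ := exists_notin ({b, t, x1} : Finset α) (by
      have := card_insert_le' b {t, x1} 2 (card_insert_le' t {x1} 1 (by simp)); omega)
    obtain ⟨x3, hx3⟩ := exists_notin ({b, t, x1, x2} : Finset α) (by
      have := card_insert_le' b {t, x1, x2} 3 (card_insert_le' t {x1, x2} 2
        (card_insert_le' x1 {x2} 1 (by simp))); omega)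
    obtain ⟨x4, hx4⟩ := exists_notin ({b, t, x1, x2, x3} : Finset α) (by
      have := card_insert_le' b {t, x1, x2, x3} 4 (card_insert_le' t {x1, x2, x3} 3
        (card_insert_le' x1 {x2, x3} 2 (card_insert_le' x2 {x3} 1 (by simp)))); omega)
    simp only [Finset.mem_insert, Finset.mem_singleton, not_or] at hx1 hx2 hx3 hx4
    obtain ⟨h1b, h1t⟩ := hx1
    obtain ⟨h2b, h2t, h21⟩ := hx2
    obtain ⟨h3b, h3t, h31, h32⟩ := hx3
    obtain ⟨h4b, h4t, h41, h42, h43⟩ := hx4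
    have mem1 : cyc t x1 x2 ∈ alternatingGroup α ⊓ fixSub (· ≠ b) := by
      refine Subgroup.mem_inf.mpr ⟨cyc_mem (Ne.symm h1t) (Ne.symm h21), fun x hx => ?_⟩
      simp only [ne_eq, not_not] at hx
      subst hx
      exact cyc_fix (Ne.symm htb) (Ne.symm h1b) (Ne.symm h2b)
    have mem2 : cyc t x3 x4 ∈ alternatingGroup α ⊓ fixSub (· ≠ b) := by
      refine Subgroup.mem_inf.mpr ⟨cyc_mem (Ne.symm h3t) (Ne.symm h43), fun x hx => ?_⟩
      simp only [ne_eq, not_not] at hx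
      subst hx
      exact cyc_fix (Ne.symm htb) (Ne.symm h3b) (Ne.symm h4b)
    have e1 : σ (cyc t x1 x2 t) = cyc t x1 x2 (σ t) := by
      have := hσ _ mem1
      have := congrArg (fun τ : Perm α => τ t) this
      simpa [Perm.mul_apply] using this
    have e2 : σ (cyc t x3 x4 t) = cyc t x3 x4 (σ t) := by
      have := hσ _ mem2
      have := congrArg (fun τ : Perm α => τ t) this
      simpa [Perm.mul_apply] using this
    rw [cyc_app1 (Ne.symm h1t) (Ne.symm h2t)] at e1
    rw [cyc_app1 (Ne.symm h3t) (Ne.symm h4t)] at e2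
    -- σ x1 = cyc t x1 x2 (σ t), σ x3 = cyc t x3 x4 (σ t)
    by_cases hst : σ t = t
    · exact hst
    exfalso
    have hin1 : σ t = x1 ∨ σ t = x2 := by
      by_contra hcc
      push_neg at hcc
      rw [cyc_fix hst hcc.1 hcc.2] at e1
      exact h1t (σ.injective e1)
    have hin2 : σ t = x3 ∨ σ t = x4 := by
      by_contra hcc
      push_neg at hcc
      rw [cyc_fix hst hcc.1 hcc.2] at e2
      exact h3t (σ.injective e2)
    rcases hin1 with h | h <;> rcases hin2 with h' | h'
    · exact h31 (h'.symm.trans h)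
    · exact h41 (h'.symm.trans h)
    · exact h32 (h'.symm.trans h)
    · exact h42 (h'.symm.trans h)
  have hb : σ b = b := by
    by_contra hc
    have h1 : σ (σ b) = σ b := key (σ b) hc
    exact hc (σ.injective h1)
  ext x
  by_cases hx : x = b
  · subst hx; simpa using hb
  · simpa using key x hx

lemma sq_mem {G : Type*} [Group G] (R : Subgroup G) (h2 : R.index = 2) (g : G) :
    g * g ∈ R := by
  obtain ⟨a, hx⟩ := Subgroup.index_eq_two_iff.mp h2
  by_cases hg : g ∈ R
  · exact mul_mem hg hg
  · have hga : g * a ∈ R := by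
      rcases hx g with ⟨h1, -⟩ | ⟨h1, -⟩
      · exact h1
      · exact absurd h1 hg
    by_cases hgg : g * g ∈ R
    · exact hgg
    · have hgga : g * g * a ∈ R := by
        rcases hx (g * g) with ⟨h1, -⟩ | ⟨h1, -⟩
        · exact h1
        · exact absurd h1 hgg
      have heq : (g * g * a) * (g * a)⁻¹ = g := by group
      exact absurd (heq ▸ mul_mem hgga (inv_mem hga)) hg

lemma range_eq_alternating [Nontrivial α] (R : Subgroup (Perm α))
    (hcard : 2 * Nat.card R = Nat.card (Perm α)) : R = alternatingGroup α := by
  have hpos : 0 < Nat.card ↥R := Nat.card_pos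
  have hidx : R.index = 2 := by
    have h1 := Subgroup.card_mul_index R
    rw [← hcard] at h1
    have : Nat.card ↥R * R.index = Nat.card ↥R * 2 := by omega
    exact Nat.eq_of_mul_eq_mul_left hpos this
  have h3 : ∀ f : Perm α, IsThreeCycle f → f ∈ R := by
    intro f hf
    have ho : f ^ 3 = 1 := by rw [← hf.orderOf]; exact pow_orderOf_eq_one f
    have h4 : (f * f) * (f * f) = f := by
      have h5 : (f * f) * (f * f) = f ^ 4 := by
        rw [show (4 : ℕ) = 2 + 2 from rfl, pow_add, pow_two]
      rw [h5, show (4 : ℕ) = 3 + 1 from rfl, pow_succ, ho, one_mul]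
    exact h4 ▸ sq_mem R hidx (f * f)
  have halt : alternatingGroup α ≤ R := by
    rw [← closure_three_cycles_eq_alternating]
    exact (Subgroup.closure_le R).mpr (fun f hf => h3 f hf)
  have h6 : 2 * Nat.card ↥(alternatingGroup α) = Nat.card (Perm α) := by
    rw [Nat.card_eq_fintype_card, Nat.card_eq_fintype_card]
    exact two_mul_card_alternatingGroup
  have hcards : Nat.card ↥R ≤ Nat.card ↥(alternatingGroup α) := by omega
  exact (subgroup_eq_of_le_of_card_le halt hcards).symm

end DCover

end Chunk3

section Chunk4

open Equiv Equiv.Perm Subgroup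

namespace DCover

variable {β : Type*} [DecidableEq β] [Fintype β]
variable {Q : Type*} [Group Q] [Finite Q]

/-- even permutations fixing the point `m` -/
def Wpt (m : β) : Subgroup (Perm β) := alternatingGroup β ⊓ fixSub (· ≠ m)

/-- even permutations fixing the points `m` and `l` -/
def Wpair (m l : β) : Subgroup (Perm β) :=
  alternatingGroup β ⊓ fixSub (fun x => x ≠ m ∧ x ≠ l)

lemma mem_Wpt {m : β} {σ : Perm β} :
    σ ∈ Wpt m ↔ σ ∈ alternatingGroup β ∧ σ m = m := by
  rw [Wpt, Subgroup.mem_inf, mem_fixSub_ne]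

lemma mem_Wpair {m l : β} {σ : Perm β} :
    σ ∈ Wpair m l ↔ σ ∈ alternatingGroup β ∧ σ m = m ∧ σ l = l := by
  rw [Wpair, Subgroup.mem_inf]
  constructor
  · rintro ⟨h1, h2⟩
    refine ⟨h1, h2 m (by simp), h2 l (by simp)⟩
  · rintro ⟨h1, h2, h3⟩
    refine ⟨h1, fun x hx => ?_⟩
    simp only [ne_eq, not_and, not_not] at hx
    by_cases hxm : x = m
    · subst hxm; exact h2
    · have := hx hxm
      subst this; exact h3

lemma Wpair_le_Wpt_left {m l : β} : Wpair m l ≤ Wpt m := by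
  intro τ hτ
  rw [mem_Wpair] at hτ
  rw [mem_Wpt]
  exact ⟨hτ.1, hτ.2.1⟩

lemma Wpair_le_Wpt_right {m l : β} : Wpair m l ≤ Wpt l := by
  intro τ hτ
  rw [mem_Wpair] at hτ
  rw [mem_Wpt]
  exact ⟨hτ.1, hτ.2.2⟩

lemma five_le_card_ne (h7 : 7 ≤ Fintype.card β) (m : β) :
    5 ≤ Fintype.card {x : β // x ≠ m} := by
  rw [Fintype.card_subtype]
  have hsub : Finset.univ \ {m} ⊆ Finset.univ.filter (fun x => x ≠ m) := by
    intro x hx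
    simp only [Finset.mem_sdiff, Finset.mem_singleton] at hx
    simp only [Finset.mem_filter, Finset.mem_univ, true_and]
    exact hx.2
  have h1 := Finset.card_le_card hsub
  rw [Finset.card_sdiff_of_subset (Finset.subset_univ _), Finset.card_univ,
    Finset.card_singleton] at h1
  omega

lemma five_le_card_pair (h7 : 7 ≤ Fintype.card β) (m l : β) :
    5 ≤ Fintype.card {x : β // x ≠ m ∧ x ≠ l} := by
  rw [Fintype.card_subtype]
  have hsub : Finset.univ \ {m, l} ⊆ Finset.univ.filter (fun x => x ≠ m ∧ x ≠ l) := by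
    intro x hx
    simp only [Finset.mem_sdiff, Finset.mem_insert, Finset.mem_singleton, not_or] at hx
    simp only [Finset.mem_filter, Finset.mem_univ, true_and]
    exact hx.2
  have h1 := Finset.card_le_card hsub
  have h2 : ({m, l} : Finset β).card ≤ 2 := card_insert_le' m {l} 1 (by simp)
  rw [Finset.card_sdiff_of_subset (Finset.subset_univ _), Finset.card_univ] at h1
  omega

lemma Wpt_perfect (h7 : 7 ≤ Fintype.card β) (m : β) : commutator ↥(Wpt m : Subgroup (Perm β)) = ⊤ :=
  perfW _ (by
    have := five_le_card_ne h7 m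
    omega)

lemma Wpair_perfect (h7 : 7 ≤ Fintype.card β) (m l : β) :
    commutator ↥(Wpair m l : Subgroup (Perm β)) = ⊤ :=
  perfW _ (by
    have := five_le_card_pair h7 m l
    omega)

/-- `C` is a complement of the centre over the subgroup `W` of permutations. -/
def IsComp (φ : Q →* Perm β) (z : Q) (W : Subgroup (Perm β)) (C : Subgroup Q) : Prop :=
  Subgroup.map φ C = W ∧ z ∉ C

section WithZ

variable (φ : Q →* Perm β) (z : Q)

lemma comp_inj (hzker : ∀ q : Q, φ q = 1 ↔ q = 1 ∨ q = z) {W : Subgroup (Perm β)} {C : Subgroup Q} (h : IsComp φ z W C) :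
    ∀ x ∈ C, ∀ y ∈ C, φ x = φ y → x = y := by
  intro x hx y hy hφ
  have h1 : φ (x * y⁻¹) = 1 := by
    rw [map_mul, map_inv, hφ, mul_inv_cancel]
  rcases (hzker _).mp h1 with h2 | h2
  · have := mul_inv_eq_one.mp h2
    exact this
  · exfalso
    exact h.2 (h2 ▸ mul_mem hx (inv_mem hy))

lemma comp_perfect (hzker : ∀ q : Q, φ q = 1 ↔ q = 1 ∨ q = z)
    {W : Subgroup (Perm β)} {C : Subgroup Q}
    (hW : commutator ↥W = ⊤) (h : IsComp φ z W C) : commutator ↥C = ⊤ := by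
  have hinj : Function.Injective (φ.comp C.subtype) := by
    intro a b hab
    exact Subtype.ext (comp_inj φ z hzker h _ a.2 _ b.2 hab)
  have hrangeC : (φ.comp C.subtype).range = W := by
    rw [MonoidHom.range_comp, Subgroup.range_subtype]
    exact h.1
  exact commutator_top_of_mulEquiv
    ((MonoidHom.ofInjective hinj).trans (MulEquiv.subgroupCongr hrangeC)).symm hW

lemma comp_unique (hz : z ∈ Subgroup.center Q)
    (hzker : ∀ q : Q, φ q = 1 ↔ q = 1 ∨ q = z)
    {W : Subgroup (Perm β)} {C₁ C₂ : Subgroup Q}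
    (hW : commutator ↥W = ⊤) (h₁ : IsComp φ z W C₁) (h₂ : IsComp φ z W C₂) :
    C₁ = C₂ := by
  suffices hsub : ∀ C C' : Subgroup Q, IsComp φ z W C → IsComp φ z W C' → C ≤ C' by
    exact le_antisymm (hsub C₁ C₂ h₁ h₂) (hsub C₂ C₁ h₂ h₁)
  intro C C' h h'
  have hperfC := comp_perfect φ z hzker hW h
  have hch : ∀ x : ↥C, ∃ y : Q, y ∈ C' ∧ φ y = φ (x : Q) := by
    intro x
    have hx : φ (x : Q) ∈ W := by
      rw [← h.1]
      exact Subgroup.mem_map_of_mem φ x.2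
    rw [← h'.1] at hx
    obtain ⟨y, hy, hyx⟩ := hx
    exact ⟨y, hy, hyx⟩
  choose yf hy1 hy2 using hch
  have hcen : ∀ x : ↥C, (x : Q) * (yf x)⁻¹ ∈ Subgroup.center Q := by
    intro x
    have h1 : φ ((x : Q) * (yf x)⁻¹) = 1 := by
      rw [map_mul, map_inv, hy2, mul_inv_cancel]
    rcases (hzker _).mp h1 with h2 | h2
    · rw [h2]; exact Subgroup.one_mem _
    · rw [h2]; exact hz
  have hmul : ∀ x₁ x₂ : ↥C,
      ((x₁ * x₂ : ↥C) : Q) * (yf (x₁ * x₂))⁻¹ =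
        ((x₁ : Q) * (yf x₁)⁻¹) * ((x₂ : Q) * (yf x₂)⁻¹) := by
    intro x₁ x₂
    have hyy : yf (x₁ * x₂) = yf x₁ * yf x₂ := by
      apply comp_inj φ z hzker h' _ (hy1 _) _ (mul_mem (hy1 x₁) (hy1 x₂))
      rw [hy2, map_mul, hy2, hy2]
      push_cast
      rw [map_mul]
    have hc2 := Subgroup.mem_center_iff.mp (hcen x₂)
    push_cast
    rw [hyy]
    calc (x₁ : Q) * (x₂ : Q) * (yf x₁ * yf x₂)⁻¹
        = (x₁ : Q) * ((x₂ : Q) * (yf x₂)⁻¹ * (yf x₁)⁻¹) := by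
          simp only [mul_inv_rev, mul_assoc]
      _ = (x₁ : Q) * (yf x₁)⁻¹ * ((x₂ : Q) * (yf x₂)⁻¹) := by
          rw [mul_assoc ((x₁ : Q)) ((yf x₁)⁻¹) ((x₂ : Q) * (yf x₂)⁻¹), hc2 ((yf x₁)⁻¹),
            ← mul_assoc]
  let F : ↥C →* Q := MonoidHom.mk' (fun x => (x : Q) * (yf x)⁻¹) hmul
  have hFtriv : ∀ x : ↥C, F x = 1 := by
    have hker : (⊤ : Subgroup ↥C) ≤ F.ker := by
      rw [← hperfC, _root_.commutator_def]
      rw [Subgroup.commutator_le]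
      intro g₁ _ g₂ _
      rw [MonoidHom.mem_ker, map_commutatorElement,
        commutatorElement_eq_one_iff_mul_comm]
      show F g₁ * F g₂ = F g₂ * F g₁
      exact Subgroup.mem_center_iff.mp (hcen g₂) (F g₁)
    intro x
    exact MonoidHom.mem_ker.mp (hker (Subgroup.mem_top x))
  intro x hx
  have h1 : (⟨x, hx⟩ : ↥C) = x := rfl
  have h2 := hFtriv ⟨x, hx⟩
  have h3 : x * (yf ⟨x, hx⟩)⁻¹ = 1 := h2
  have h4 : x = yf ⟨x, hx⟩ := by
    rw [mul_inv_eq_one] at h3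
    exact h3
  rw [h4]
  exact hy1 _

end WithZ

end DCover

end Chunk4

section Chunk5

open Equiv Equiv.Perm Subgroup

namespace DCover

set_option linter.unusedSectionVars false

variable {β : Type*} [DecidableEq β] [Fintype β]
variable {Q : Type*} [Group Q] [Finite Q]

lemma sign_conj' (σ τ : Perm β) : sign (σ⁻¹ * τ * σ) = sign τ := by
  rw [map_mul, map_mul, map_inv]
  rw [mul_comm ((sign σ)⁻¹) (sign τ), mul_assoc, inv_mul_cancel, mul_one]

lemma conj_mem_Wpt_iff {m : β} {σ τ : Perm β} (hσ : σ ∈ alternatingGroup β) :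
    σ⁻¹ * τ * σ ∈ Wpt m ↔ τ ∈ Wpt (σ m) := by
  rw [mem_Wpt, mem_Wpt, mem_alternatingGroup, mem_alternatingGroup, sign_conj']
  have hpt : (σ⁻¹ * τ * σ) m = σ⁻¹ (τ (σ m)) := rfl
  rw [hpt, Perm.inv_eq_iff_eq]

lemma conj_Wpt (m : β) (σ : Perm β) (hσ : σ ∈ alternatingGroup β) :
    Subgroup.map (MulAut.conj σ).toMonoidHom (Wpt m) = Wpt (σ m) := by
  ext τ
  rw [Subgroup.mem_map_equiv, MulAut.conj_symm_apply]
  exact conj_mem_Wpt_iff hσ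

variable (φ : Q →* Perm β) (z : Q)

lemma comp_conj (hz : z ∈ Subgroup.center Q) {W : Subgroup (Perm β)} {C : Subgroup Q}
    (h : IsComp φ z W C) (q : Q) :
    IsComp φ z (Subgroup.map (MulAut.conj (φ q)).toMonoidHom W)
      (Subgroup.map (MulAut.conj q).toMonoidHom C) := by
  constructor
  · have hcomm : φ.comp (MulAut.conj q).toMonoidHom
        = (MulAut.conj (φ q)).toMonoidHom.comp φ := by
      apply MonoidHom.ext
      intro x
      simp [MulAut.conj_apply]
    rw [Subgroup.map_map, hcomm, ← Subgroup.map_map, h.1]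
  · rintro ⟨c, hcmem, hc2⟩
    have hc3 : q * c * q⁻¹ = z := hc2
    have hc4 : c = q⁻¹ * z * q := by
      rw [← hc3]; group
    have hc5 : q⁻¹ * z * q = z := by
      have hcen := Subgroup.mem_center_iff.mp hz
      rw [mul_assoc, ← hcen q, ← mul_assoc, inv_mul_cancel, one_mul]
    rw [hc4, hc5] at hcmem
    exact h.2 hcmem

lemma comp_exists_all (hz : z ∈ Subgroup.center Q)
    (hrange : φ.range = alternatingGroup β) (h7 : 7 ≤ Fintype.card β)
    {b : β} {C₀ : Subgroup Q} (h₀ : IsComp φ z (Wpt b) C₀) :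
    ∀ m : β, ∃ C, IsComp φ z (Wpt m) C := by
  intro m
  obtain ⟨σ, hσalt, hσb⟩ : ∃ σ, σ ∈ alternatingGroup β ∧ σ b = m := by
    by_cases hbm : b = m
    · exact ⟨1, one_mem _, by simp [hbm]⟩
    · obtain ⟨u, hu⟩ := exists_notin ({b, m} : Finset β)
        (by have := card_insert_le' b {m} 1 (by simp); omega)
      simp only [Finset.mem_insert, Finset.mem_singleton, not_or] at hu
      exact ⟨cyc b m u, cyc_mem hbm (Ne.symm hu.2), cyc_app1 hbm (Ne.symm hu.1)⟩
  obtain ⟨q, hq⟩ : ∃ q, φ q = σ := by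
    have : σ ∈ φ.range := hrange ▸ hσalt
    exact this
  refine ⟨Subgroup.map (MulAut.conj q).toMonoidHom C₀, ?_⟩
  have h1 := comp_conj φ z hz h₀ q
  rwa [conj_Wpt b (φ q) (by rw [hq]; exact hσalt), hq, hσb] at h1

/-- The context for the lifting system. -/
structure Ctx (φ : Q →* Perm β) (z : Q) (Kc : β → Subgroup Q) : Prop where
  hz : z ∈ Subgroup.center Q
  hzker : ∀ q : Q, φ q = 1 ↔ q = 1 ∨ q = z
  hrange : φ.range = alternatingGroup β
  h7 : 7 ≤ Fintype.card β
  hKc : ∀ m : β, IsComp φ z (Wpt m) (Kc m)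

/-- `x` is the canonical lift of the even permutation `g` (that fixes a point). -/
def LiftP (φ : Q →* Perm β) (Kc : β → Subgroup Q) (g : Perm β) (x : Q) : Prop :=
  φ x = g ∧ ∃ m, g m = m ∧ x ∈ Kc m

variable {φ z}
variable {Kc : β → Subgroup Q}

lemma Ctx.mem_alt (hc : Ctx φ z Kc) (x : Q) : φ x ∈ alternatingGroup β :=
  hc.hrange ▸ ⟨x, rfl⟩

lemma Ctx.coh (hc : Ctx φ z Kc) {m l : β} {x : Q} (hx : x ∈ Kc m)
    (hm : φ x m = m) (hl : φ x l = l) : x ∈ Kc l := by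
  by_cases hml : m = l
  · exact hml ▸ hx
  set C1 := Kc m ⊓ Subgroup.comap φ (Wpair m l) with hC1
  set C2 := Kc l ⊓ Subgroup.comap φ (Wpair m l) with hC2
  have key : ∀ (r : β) (hle : Wpair m l ≤ Wpt r) (C : Subgroup Q),
      IsComp φ z (Wpt r) C →
      IsComp φ z (Wpair m l) (C ⊓ Subgroup.comap φ (Wpair m l)) := by
    intro r hle C hC
    constructor
    · apply le_antisymm
      · rintro τ ⟨c, hcmem, rfl⟩
        exact Subgroup.mem_comap.mp (Subgroup.mem_inf.mp hcmem).2
      · intro w hw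
        have hw' : w ∈ Wpt r := hle hw
        rw [← hC.1] at hw'
        obtain ⟨x', hx', rfl⟩ := hw'
        exact ⟨x', Subgroup.mem_inf.mpr ⟨hx', Subgroup.mem_comap.mpr hw⟩, rfl⟩
    · intro hzC
      exact hC.2 (Subgroup.mem_inf.mp hzC).1
  have h1 : IsComp φ z (Wpair m l) C1 := key m Wpair_le_Wpt_left _ (hc.hKc m)
  have h2 : IsComp φ z (Wpair m l) C2 := key l Wpair_le_Wpt_right _ (hc.hKc l)
  have heq := comp_unique φ z hc.hz hc.hzker (Wpair_perfect hc.h7 m l) h1 h2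
  have hxC1 : x ∈ C1 := Subgroup.mem_inf.mpr
    ⟨hx, Subgroup.mem_comap.mpr (mem_Wpair.mpr ⟨hc.mem_alt x, hm, hl⟩)⟩
  rw [heq] at hxC1
  exact (Subgroup.mem_inf.mp hxC1).1

lemma Ctx.mem_of_fix (hc : Ctx φ z Kc) {g : Perm β} {x : Q} {m : β}
    (h : LiftP φ Kc g x) (hm : g m = m) : x ∈ Kc m := by
  obtain ⟨hφx, m', hm', hxm'⟩ := h
  exact hc.coh hxm' (by rw [hφx]; exact hm') (by rw [hφx]; exact hm)

lemma Ctx.uniq (hc : Ctx φ z Kc) {g : Perm β} {x y : Q}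
    (h1 : LiftP φ Kc g x) (h2 : LiftP φ Kc g y) : x = y := by
  obtain ⟨hφy, m', hm', hym'⟩ := h2
  have hx' : x ∈ Kc m' := hc.mem_of_fix h1 hm'
  exact comp_inj φ z hc.hzker (hc.hKc m') x hx' y hym' (h1.1.trans hφy.symm)

lemma Ctx.exists_lift (hc : Ctx φ z Kc) {g : Perm β} {m : β}
    (hg : g ∈ alternatingGroup β) (hm : g m = m) :
    ∃ x, LiftP φ Kc g x ∧ x ∈ Kc m := by
  have h1 : g ∈ Wpt m := mem_Wpt.mpr ⟨hg, hm⟩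
  rw [← (hc.hKc m).1] at h1
  obtain ⟨x, hx, rfl⟩ := h1
  exact ⟨x, ⟨rfl, m, hm, hx⟩, hx⟩

lemma Ctx.lift_mul (hc : Ctx φ z Kc) {g h : Perm β} {x y : Q} {m : β}
    (h1 : LiftP φ Kc g x) (h2 : LiftP φ Kc h y) (hm : g m = m) (hm' : h m = m) :
    LiftP φ Kc (g * h) (x * y) := by
  refine ⟨by rw [map_mul, h1.1, h2.1], m, by rw [Perm.mul_apply, hm', hm], ?_⟩
  exact mul_mem (hc.mem_of_fix h1 hm) (hc.mem_of_fix h2 hm')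

lemma Ctx.lift_inv (hc : Ctx φ z Kc) {g : Perm β} {x : Q}
    (h : LiftP φ Kc g x) : LiftP φ Kc g⁻¹ x⁻¹ := by
  obtain ⟨hφx, m, hm, hxm⟩ := h
  exact ⟨by rw [map_inv, hφx], m, Perm.inv_eq_iff_eq.mpr hm.symm, inv_mem hxm⟩

lemma Ctx.lift_one (hc : Ctx φ z Kc) : LiftP φ Kc 1 1 := by
  have : Nonempty β := Fintype.card_pos_iff.mp (by have := hc.h7; omega)
  obtain ⟨m⟩ := this
  exact ⟨map_one φ, m, rfl, one_mem _⟩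

lemma Ctx.Kc_conj (hc : Ctx φ z Kc) (q : Q) (m : β) :
    Subgroup.map (MulAut.conj q).toMonoidHom (Kc m) = Kc (φ q m) := by
  have h1 := comp_conj φ z hc.hz (hc.hKc m) q
  rw [conj_Wpt m (φ q) (hc.mem_alt q)] at h1
  exact comp_unique φ z hc.hz hc.hzker (Wpt_perfect hc.h7 _) h1 (hc.hKc (φ q m))

lemma Ctx.lift_conj (hc : Ctx φ z Kc) {g : Perm β} {x : Q}
    (h : LiftP φ Kc g x) (q : Q) :
    LiftP φ Kc (φ q * g * (φ q)⁻¹) (q * x * q⁻¹) := by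
  obtain ⟨hφx, m, hm, hxm⟩ := h
  refine ⟨by rw [map_mul, map_mul, map_inv, hφx], φ q m, ?_, ?_⟩
  · rw [Perm.mul_apply, Perm.mul_apply, (Perm.inv_eq_iff_eq.mpr rfl : (φ q)⁻¹ (φ q m) = m), hm]
  · rw [← hc.Kc_conj q m]
    exact ⟨x, hxm, rfl⟩

lemma Ctx.not_lift_z (hc : Ctx φ z Kc) {g : Perm β} (h : LiftP φ Kc g z) : False := by
  obtain ⟨-, m, -, hzm⟩ := h
  exact (hc.hKc m).2 hzm

end DCover

end Chunk5

section Chunk6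

open Equiv Equiv.Perm Subgroup
open scoped commutatorElement

namespace DCover

set_option linter.unusedSectionVars false
set_option maxHeartbeats 1000000

variable {β : Type*} [DecidableEq β] [Fintype β]
variable {Q : Type*} [Group Q] [Finite Q]
variable {φ : Q →* Perm β} {z : Q} {Kc : β → Subgroup Q}

/-- Key combinatorial lemma: a product of three canonical lifts is a product of two. -/
lemma Ctx.star (hc : Ctx φ z Kc) {a b c : Perm β} {x y w : Q}
    (ha : LiftP φ Kc a x) (hb : LiftP φ Kc b y) (hw : LiftP φ Kc c w) :
    ∃ u v r t, LiftP φ Kc u r ∧ LiftP φ Kc v t ∧ x * y * w = r * t := by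
  obtain ⟨hφx, fa, hafa, hxfa⟩ := id ha
  obtain ⟨hφy, fb, hbfb, hyfb⟩ := id hb
  obtain ⟨hφw, fc, hcfc, hwfc⟩ := id hw
  by_cases hcs1 : ∃ p, a p = p ∧ b p = p
  · obtain ⟨p, hap, hbp⟩ := hcs1
    exact ⟨a * b, c, x * y, w, hc.lift_mul ha hb hap hbp, hw, rfl⟩
  by_cases hcs2 : ∃ p, b p = p ∧ c p = p
  · obtain ⟨p, hbp, hcp⟩ := hcs2
    exact ⟨a, b * c, x, y * w, ha, hc.lift_mul hb hw hbp hcp, mul_assoc x y w⟩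
  by_cases hcs3 : ∃ p, a p = p ∧ c p = p
  · obtain ⟨p, hap, hcp⟩ := hcs3
    have h1 : LiftP φ Kc (a * b * a⁻¹) (x * y * x⁻¹) := by
      have := hc.lift_conj hb x
      rwa [hφx] at this
    have h2 : LiftP φ Kc (a * c) (x * w) := hc.lift_mul ha hw hap hcp
    exact ⟨a * b * a⁻¹, a * c, x * y * x⁻¹, x * w, h1, h2, by group⟩
  push_neg at hcs1 hcs2 hcs3
  have hfab : fa ≠ fb := fun h => hcs1 fa hafa (h ▸ hbfb)
  have hfbc : fb ≠ fc := fun h => hcs2 fb hbfb (h ▸ hcfc)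
  have hfac : fa ≠ fc := fun h => hcs3 fa hafa (h ▸ hcfc)
  have hbfc : b fc ≠ fc := fun h => hcs2 fc h hcfc
  by_cases hb4 : b fc = fa
  · -- move w leftwards over y
    have h1 : LiftP φ Kc (b * c * b⁻¹) (y * w * y⁻¹) := by
      have := hc.lift_conj hw y
      rwa [hφy] at this
    have habc : (b * c * b⁻¹) fa = fa := by
      have hbinv : b⁻¹ fa = fc := Perm.inv_eq_iff_eq.mpr hb4.symm
      rw [Perm.mul_apply, Perm.mul_apply, hbinv, hcfc, hb4]
    have h2 : LiftP φ Kc (a * (b * c * b⁻¹)) (x * (y * w * y⁻¹)) :=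
      hc.lift_mul ha h1 hafa habc
    exact ⟨a * (b * c * b⁻¹), b, x * (y * w * y⁻¹), y, h2, hb, by group⟩
  · -- decompose b = b₁ * b₂ with b₁ fixing fb, fa and b₂ fixing fb, fc
    set d := b fc with hd
    have hdfc : d ≠ fc := hbfc
    have hdfa : d ≠ fa := hb4
    have hdfb : d ≠ fb := by
      intro h
      exact hfbc (b.injective (by rw [hbfb, ← h, hd])).symm
    obtain ⟨u, hu⟩ := exists_notin ({fa, fb, fc, d} : Finset β) (by
      have := card_insert_le' fa ({fb, fc, d} : Finset β) 3
        (card_insert_le' fb ({fc, d} : Finset β) 2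
          (card_insert_le' fc ({d} : Finset β) 1 (by simp)))
      have h7 := hc.h7
      omega)
    simp only [Finset.mem_insert, Finset.mem_singleton, not_or] at hu
    obtain ⟨hufa, hufb, hufc, hud⟩ := hu
    set b₁ := cyc fc d u with hb₁
    have hb₁fc : b₁ fc = d := cyc_app1 (Ne.symm hdfc) (fun h => hufc h.symm)
    have hb₁fa : b₁ fa = fa :=
      cyc_fix hfac (Ne.symm hdfa) (fun h => hufa h.symm)
    have hb₁fb : b₁ fb = fb :=
      cyc_fix hfbc (Ne.symm hdfb) (fun h => hufb h.symm)
    have hb₁alt : b₁ ∈ alternatingGroup β := cyc_mem (Ne.symm hdfc) (Ne.symm hud)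
    obtain ⟨y₁, hy₁, hy₁mem⟩ := hc.exists_lift hb₁alt hb₁fb
    have hb₂fb : (b₁⁻¹ * b) fb = fb := by
      rw [Perm.mul_apply, hbfb, Perm.inv_eq_iff_eq]
      exact hb₁fb.symm
    have hb₂fc : (b₁⁻¹ * b) fc = fc := by
      rw [Perm.mul_apply, ← hd, Perm.inv_eq_iff_eq]
      exact hb₁fc.symm
    have hy₂ : LiftP φ Kc (b₁⁻¹ * b) (y₁⁻¹ * y) := by
      refine ⟨by rw [map_mul, map_inv, hy₁.1, hφy], fb, hb₂fb, ?_⟩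
      exact mul_mem (inv_mem hy₁mem) (hc.mem_of_fix hb hbfb)
    have hr : LiftP φ Kc (a * b₁) (x * y₁) := hc.lift_mul ha hy₁ hafa hb₁fa
    have ht : LiftP φ Kc ((b₁⁻¹ * b) * c) ((y₁⁻¹ * y) * w) :=
      hc.lift_mul hy₂ hw hb₂fc hcfc
    exact ⟨a * b₁, (b₁⁻¹ * b) * c, x * y₁, (y₁⁻¹ * y) * w, hr, ht, by group⟩

lemma commutator_mul_central_left {G : Type*} [Group G] (n e v : G)
    (he : e ∈ Subgroup.center G) : ⁅n * e, v⁆ = ⁅n, v⁆ := by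
  have hce := Subgroup.mem_center_iff.mp he
  rw [commutatorElement_def, commutatorElement_def, mul_inv_rev]
  have h1 : n * e * v * (e⁻¹ * n⁻¹) * v⁻¹ = n * (e * v * e⁻¹) * n⁻¹ * v⁻¹ := by group
  have h2 : e * v * e⁻¹ = v := by
    rw [← hce v, mul_assoc, mul_inv_cancel, mul_one]
  rw [h1, h2]

lemma commutator_mul_central_right {G : Type*} [Group G] (n e v : G)
    (he : e ∈ Subgroup.center G) : ⁅v, n * e⁆ = ⁅v, n⁆ := by
  have hce := Subgroup.mem_center_iff.mp he
  rw [commutatorElement_def, commutatorElement_def, mul_inv_rev]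
  have h1 : v * (n * e) * v⁻¹ * (e⁻¹ * n⁻¹) = v * n * (e * v⁻¹ * e⁻¹) * n⁻¹ := by group
  have h2 : e * v⁻¹ * e⁻¹ = v⁻¹ := by
    rw [← hce v⁻¹, mul_assoc, mul_inv_cancel, mul_one]
  rw [h1, h2]

/-- The main contradiction: there is no complement over a point stabilizer. -/
theorem no_comp (hperf : commutator Q = ⊤) (hz : z ∈ Subgroup.center Q) (hz1 : z ≠ 1)
    (hzker : ∀ q : Q, φ q = 1 ↔ q = 1 ∨ q = z)
    (hrange : φ.range = alternatingGroup β) (h7 : 7 ≤ Fintype.card β)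
    {b : β} {C₀ : Subgroup Q} (h₀ : IsComp φ z (Wpt b) C₀) : False := by
  choose Kc hKc using comp_exists_all φ z hz hrange h7 h₀
  have hc : Ctx φ z Kc := ⟨hz, hzker, hrange, h7, hKc⟩
  -- the subgroup generated by pairs of lifts
  have hmulmem : ∀ v1 v2 : Q,
      (∃ g h x y, LiftP φ Kc g x ∧ LiftP φ Kc h y ∧ v1 = x * y) →
      (∃ g h x y, LiftP φ Kc g x ∧ LiftP φ Kc h y ∧ v2 = x * y) →
      (∃ g h x y, LiftP φ Kc g x ∧ LiftP φ Kc h y ∧ v1 * v2 = x * y) := by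
    rintro v1 v2 ⟨g1, h1, x1, y1, hx1, hy1, rfl⟩ ⟨g2, h2, x2, y2, hx2, hy2, rfl⟩
    obtain ⟨u, v, r, t, hr, ht, heq⟩ := hc.star hx1 hy1 hx2
    obtain ⟨u', v', r', t', hr', ht', heq'⟩ := hc.star hr ht hy2
    refine ⟨u', v', r', t', hr', ht', ?_⟩
    calc x1 * y1 * (x2 * y2) = (x1 * y1 * x2) * y2 := by group
      _ = (r * t) * y2 := by rw [heq]
      _ = r * t * y2 := rfl
      _ = r' * t' := heq'
  set N : Subgroup Q :=
    { carrier := {v | ∃ g h x y, LiftP φ Kc g x ∧ LiftP φ Kc h y ∧ v = x * y}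
      one_mem' := ⟨1, 1, 1, 1, hc.lift_one, hc.lift_one, (one_mul 1).symm⟩
      mul_mem' := fun ha hb => hmulmem _ _ ha hb
      inv_mem' := by
        rintro v ⟨g, h, x, y, hx, hy, rfl⟩
        exact ⟨h⁻¹, g⁻¹, y⁻¹, x⁻¹, hc.lift_inv hy, hc.lift_inv hx, (mul_inv_rev x y)⟩ } with hN
  -- z is not in N
  have hzN : z ∉ N := by
    rintro ⟨g, h, x, y, hx, hy, hzxy⟩
    have hφz : φ z = 1 := (hzker z).mpr (Or.inr rfl)
    have hgh : g * h = 1 := by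
      rw [← hx.1, ← hy.1, ← map_mul, ← hzxy, hφz]
    have hhg : h = g⁻¹ := eq_inv_of_mul_eq_one_right hgh
    have hyx : y = x⁻¹ := hc.uniq (hhg ▸ hy) (hc.lift_inv hx)
    rw [hyx, mul_inv_cancel] at hzxy
    exact hz1 hzxy
  -- N covers everything modulo the centre
  have hcover : ∀ q : Q, ∃ n ∈ N, φ n = φ q := by
    have halt : alternatingGroup β ≤ Subgroup.map φ N := by
      rw [← closure_three_cycles_eq_alternating]
      apply (Subgroup.closure_le _).mpr
      intro σ hσ
      obtain ⟨m, hm⟩ : ∃ m, σ m = m := by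
        have h3 := (hσ : IsThreeCycle σ).card_support
        obtain ⟨m, hm⟩ := exists_notin σ.support (by omega)
        exact ⟨m, Perm.notMem_support.mp hm⟩
      obtain ⟨xσ, hxσ, -⟩ := hc.exists_lift (hσ : IsThreeCycle σ).mem_alternatingGroup hm
      exact ⟨xσ, ⟨σ, 1, xσ, 1, hxσ, hc.lift_one, (mul_one xσ).symm⟩, hxσ.1⟩
    intro q
    obtain ⟨n, hn, hnq⟩ := halt (hc.mem_alt q)
    exact ⟨n, hn, hnq⟩
  -- every commutator is in N
  have hcomm : ∀ q q' : Q, ⁅q, q'⁆ ∈ N := by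
    intro q q'
    obtain ⟨n, hn, hφn⟩ := hcover q
    obtain ⟨n', hn', hφn'⟩ := hcover q'
    have he : n⁻¹ * q ∈ Subgroup.center Q := by
      have h1 : φ (n⁻¹ * q) = 1 := by rw [map_mul, map_inv, hφn, inv_mul_cancel]
      rcases (hzker _).mp h1 with h | h
      · rw [h]; exact Subgroup.one_mem _
      · rw [h]; exact hz
    have he' : n'⁻¹ * q' ∈ Subgroup.center Q := by
      have h1 : φ (n'⁻¹ * q') = 1 := by rw [map_mul, map_inv, hφn', inv_mul_cancel]
      rcases (hzker _).mp h1 with h | h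
      · rw [h]; exact Subgroup.one_mem _
      · rw [h]; exact hz
    have hq : q = n * (n⁻¹ * q) := by group
    have hq' : q' = n' * (n'⁻¹ * q') := by group
    have heq : ⁅q, q'⁆ = ⁅n, n'⁆ := by
      conv_lhs => rw [hq, hq']
      rw [commutator_mul_central_left _ _ _ he, commutator_mul_central_right _ _ _ he']
    rw [heq, commutatorElement_def]
    exact mul_mem (mul_mem (mul_mem hn hn') (inv_mem hn)) (inv_mem hn')
  have htop : (⊤ : Subgroup Q) ≤ N := by
    rw [← hperf, _root_.commutator_def]
    exact Subgroup.commutator_le.mpr (fun g₁ _ g₂ _ => hcomm g₁ g₂)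
  exact hzN (htop (Subgroup.mem_top z))

end DCover

end Chunk6

section Chunk7

open Equiv Equiv.Perm Subgroup

namespace DCover

set_option linter.unusedSectionVars false
set_option maxHeartbeats 1000000

variable {β : Type*} [DecidableEq β] [Fintype β]
variable {Q : Type*} [Group Q] [Finite Q]

lemma commutator_self_of_perfect {G : Type*} [Group G] (W : Subgroup G)
    (h : commutator ↥W = ⊤) : ⁅W, W⁆ = W := by
  have h1 : Subgroup.map W.subtype ⊤ = W := by
    rw [← MonoidHom.range_eq_map, Subgroup.range_subtype]
  calc ⁅W, W⁆ = ⁅Subgroup.map W.subtype ⊤, Subgroup.map W.subtype ⊤⁆ := by rw [h1]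
    _ = Subgroup.map W.subtype ⁅⊤, ⊤⁆ := by rw [Subgroup.map_commutator]
    _ = Subgroup.map W.subtype ⊤ := by rw [← _root_.commutator_def, h]
    _ = W := h1

lemma exists_z (hZ2 : Nat.card (Subgroup.center Q) = 2) :
    ∃ z : Q, z ∈ Subgroup.center Q ∧ z ≠ 1 ∧
      ∀ w ∈ Subgroup.center Q, w = 1 ∨ w = z := by
  classical
  haveI : Fintype ↥(Subgroup.center Q) := Fintype.ofFinite _
  have hnt : Nontrivial ↥(Subgroup.center Q) :=
    Finite.one_lt_card_iff_nontrivial.mp (by rw [hZ2]; omega)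
  obtain ⟨u, hu⟩ := exists_ne (1 : ↥(Subgroup.center Q))
  refine ⟨↑u, u.2, fun h => hu (Subtype.ext h), ?_⟩
  intro w hw
  by_contra hcon
  push_neg at hcon
  obtain ⟨hw1, hwu⟩ := hcon
  have hdist1 : (1 : ↥(Subgroup.center Q)) ≠ u := fun h => hu h.symm
  have hdist2 : (⟨w, hw⟩ : ↥(Subgroup.center Q)) ≠ u := fun h => hwu (congrArg Subtype.val h)
  have hdist3 : (⟨w, hw⟩ : ↥(Subgroup.center Q)) ≠ 1 := fun h => hw1 (congrArg Subtype.val h)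
  have hcard3 : ({1, u, ⟨w, hw⟩} : Finset ↥(Subgroup.center Q)).card = 3 := by
    rw [Finset.card_insert_of_notMem (by simp [hdist1, hdist3.symm]),
      Finset.card_insert_of_notMem (by simp [hdist2.symm]), Finset.card_singleton]
  have hle := Finset.card_le_univ ({1, u, ⟨w, hw⟩} : Finset ↥(Subgroup.center Q))
  rw [hcard3, ← Nat.card_eq_fintype_card, hZ2] at hle
  omega

theorem core_results (hperf : commutator Q = ⊤)
    (hZ2 : Nat.card (Subgroup.center Q) = 2)
    (φ : Q →* Perm β) (hrange : φ.range = alternatingGroup β)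
    (hker : φ.ker = Subgroup.center Q) (h7 : 7 ≤ Fintype.card β) (b : β) :
    commutator ↥(Subgroup.comap φ (Wpt b)) = ⊤ ∧
    Nat.card (Subgroup.center ↥(Subgroup.comap φ (Wpt b))) = 2 ∧
    Nonempty ((↥(Subgroup.comap φ (Wpt b)) ⧸ Subgroup.center ↥(Subgroup.comap φ (Wpt b))) ≃*
      alternatingGroup {x : β // x ≠ b}) := by
  obtain ⟨z, hz, hz1, hzchar⟩ := exists_z hZ2
  have hzker : ∀ q : Q, φ q = 1 ↔ q = 1 ∨ q = z := by
    intro q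
    constructor
    · intro h
      have : q ∈ Subgroup.center Q := by rw [← hker]; exact h
      exact hzchar q this
    · rintro (rfl | hqz)
      · exact map_one φ
      · rw [hqz]
        have : z ∈ φ.ker := by rw [hker]; exact hz
        exact this
  set H := Subgroup.comap φ (Wpt b) with hH
  have hWle : Wpt b ≤ alternatingGroup β := inf_le_left
  have himage : Subgroup.map φ H = Wpt b := by
    rw [hH, Subgroup.map_comap_eq, hrange]
    exact inf_eq_right.mpr hWle
  have hZH : Subgroup.center Q ≤ H := by
    intro c hc
    have hφc : φ c = 1 := by
      have : c ∈ φ.ker := by rw [hker]; exact hc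
      exact this
    rw [hH, Subgroup.mem_comap, hφc]
    exact one_mem _
  -- (c1) : commutator is everything
  have hc1 : commutator ↥H = ⊤ := by
    by_contra hne
    set K := Subgroup.map H.subtype (commutator ↥H) with hK
    have hmapK : Subgroup.map φ K = Wpt b := by
      rw [hK, _root_.commutator_def, Subgroup.map_map, Subgroup.map_commutator]
      have hrpsi : Subgroup.map (φ.comp H.subtype) ⊤ = Wpt b := by
        rw [← MonoidHom.range_eq_map, MonoidHom.range_comp, Subgroup.range_subtype, himage]
      rw [hrpsi]
      exact commutator_self_of_perfect _ (Wpt_perfect h7 b)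
    have hzK : z ∉ K := by
      intro hzK
      apply hne
      have hHK : ∀ q, q ∈ H → q ∈ K := by
        intro q hq
        have hφq : φ q ∈ Wpt b := hq
        rw [← hmapK] at hφq
        obtain ⟨k, hk, hkq⟩ := hφq
        have h1 : φ (k⁻¹ * q) = 1 := by rw [map_mul, map_inv, hkq, inv_mul_cancel]
        rcases (hzker _).mp h1 with h | h
        · have : q = k := by
            have := mul_eq_one_iff_inv_eq.mp h
            rw [← this]
            simp
          exact this ▸ hk
        · have : q = k * z := by
            rw [← h]; group
          rw [this]
          exact mul_mem hk hzK
      have hKtop : K = Subgroup.map H.subtype ⊤ := by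
        apply le_antisymm
        · exact Subgroup.map_mono le_top
        · rintro q ⟨y, -, rfl⟩
          exact hHK _ y.2
      rw [hK] at hKtop
      have := Subgroup.map_injective H.subtype_injective hKtop
      exact this
    exact absurd (no_comp hperf hz hz1 hzker hrange h7 (b := b) ⟨hmapK, hzK⟩) (fun h => h)
  -- (c2) : the centre of H is the centre of Q
  have hc2 : Subgroup.center ↥H = (Subgroup.center Q).subgroupOf H := by
    apply le_antisymm
    · intro cH hcH
      rw [Subgroup.mem_subgroupOf]
      have hφ1 : φ ↑cH = 1 := by
        apply centralizer_fix (by omega : 6 ≤ Fintype.card β) b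
        intro τ hτ
        have hτ' : τ ∈ Wpt b := by rw [Wpt]; exact hτ
        rw [← himage] at hτ'
        obtain ⟨h, hh, rfl⟩ := hτ'
        have hcomm := Subgroup.mem_center_iff.mp hcH ⟨h, hh⟩
        have hcoe : h * ↑cH = ↑cH * h := congrArg Subtype.val hcomm
        rw [← map_mul, ← map_mul, hcoe]
      rw [← hker]
      exact hφ1
    · intro cH hcH
      rw [Subgroup.mem_subgroupOf] at hcH
      rw [Subgroup.mem_center_iff]
      intro g
      apply Subtype.ext
      exact Subgroup.mem_center_iff.mp hcH ↑g
  have hc2card : Nat.card (Subgroup.center ↥H) = 2 := by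
    rw [hc2, ← hZ2]
    exact Nat.card_congr (Subgroup.subgroupOfEquivOfLe hZH).toEquiv
  refine ⟨hc1, hc2card, ?_⟩
  -- (c3) : the central quotient
  set ψ := φ.comp H.subtype with hψ
  have hkerψ : ψ.ker = Subgroup.center ↥H := by
    rw [hc2, hψ]
    ext x
    rw [MonoidHom.mem_ker, Subgroup.mem_subgroupOf, ← hker, MonoidHom.mem_ker]
    rfl
  have hrangeψ : ψ.range = Wpt b := by
    rw [hψ, MonoidHom.range_comp, Subgroup.range_subtype, himage]
  have e0 : (↥H ⧸ Subgroup.center ↥H) ≃* (↥H ⧸ ψ.ker) :=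
    QuotientGroup.quotientMulEquivOfEq hkerψ.symm
  have e1 : (↥H ⧸ ψ.ker) ≃* ψ.range := QuotientGroup.quotientKerEquivRange ψ
  have e2 : ψ.range ≃* ↥(alternatingGroup β ⊓ fixSub (· ≠ b)) :=
    MulEquiv.subgroupCongr (by rw [hrangeψ, Wpt])
  exact ⟨(e0.trans (e1.trans e2)).trans (subIso (· ≠ b))⟩

end DCover

end Chunk7

section Chunk8

open Equiv Equiv.Perm Subgroup
open scoped commutatorElement

namespace DCover

set_option linter.unusedSectionVars false
set_option maxHeartbeats 1000000

variable {Q : Type*} [Group Q] [Finite Q]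

lemma card_ne_point {γ : Type*} [DecidableEq γ] [Fintype γ] (a : γ) :
    Fintype.card {x : γ // x ≠ a} = Fintype.card γ - 1 := by
  rw [Fintype.card_subtype]
  have h1 : (Finset.univ.filter fun x : γ => x ≠ a) = Finset.univ.erase a := by
    ext x
    simp [Finset.mem_erase]
  rw [h1, Finset.card_erase_of_mem (Finset.mem_univ a), Finset.card_univ]

/-- Quasi-simplicity: every normal subgroup of `Q` is everything or central. -/
lemma normq {n : ℕ} (hn : 7 ≤ n) (hperf : commutator Q = ⊤)
    (e : (Q ⧸ Subgroup.center Q) ≃* alternatingGroup (Fin n)) :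
    ∀ M : Subgroup Q, M.Normal → M = ⊤ ∨ M ≤ Subgroup.center Q := by
  set ψ : Q →* Perm (Fin n) :=
    (alternatingGroup (Fin n)).subtype.comp
      (e.toMonoidHom.comp (QuotientGroup.mk' (Subgroup.center Q))) with hψ
  have happ : ∀ q : Q, ψ q = ↑(e (QuotientGroup.mk q)) := fun q => rfl
  have hψsurj : Function.Surjective
      (e.toMonoidHom.comp (QuotientGroup.mk' (Subgroup.center Q))) :=
    e.surjective.comp (QuotientGroup.mk'_surjective _)
  have hrange : ψ.range = alternatingGroup (Fin n) := by
    rw [hψ, MonoidHom.range_comp, MonoidHom.range_eq_top_of_surjective _ hψsurj,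
      ← MonoidHom.range_eq_map, Subgroup.range_subtype]
  have hker : ψ.ker = Subgroup.center Q := by
    ext q
    rw [MonoidHom.mem_ker, happ, OneMemClass.coe_eq_one, MulEquiv.map_eq_one_iff,
      QuotientGroup.eq_one_iff]
  intro M hM
  set N' := Subgroup.map ψ M with hN'
  have hle : N' ≤ alternatingGroup (Fin n) := by
    rw [← hrange]
    rintro x ⟨m, -, rfl⟩
    exact ⟨m, rfl⟩
  have hconj : ∀ σ ∈ alternatingGroup (Fin n), ∀ x ∈ N', σ * x * σ⁻¹ ∈ N' := by
    intro σ hσ x hx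
    obtain ⟨q, hq⟩ : σ ∈ ψ.range := hrange ▸ hσ
    obtain ⟨m, hm, rfl⟩ := hx
    refine ⟨q * m * q⁻¹, hM.conj_mem m hm q, ?_⟩
    rw [map_mul, map_mul, map_inv, hq]
  have h5 : 5 ≤ Fintype.card (Fin n) := by simp; omega
  rcases altnorm h5 N' hle hconj with hbot | htop
  · right
    intro m hm
    have : ψ m ∈ N' := ⟨m, hm, rfl⟩
    rw [hbot, Subgroup.mem_bot] at this
    rw [← hker]
    exact this
  · left
    have hcover : ∀ q : Q, ∃ m ∈ M, ψ m = ψ q := by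
      intro q
      have h1 : ψ q ∈ N' := htop (by rw [← hrange]; exact ⟨q, rfl⟩)
      obtain ⟨m, hm, hmq⟩ := h1
      exact ⟨m, hm, hmq⟩
    have hcomm : ∀ q q' : Q, ⁅q, q'⁆ ∈ M := by
      intro q q'
      obtain ⟨m, hm, hφm⟩ := hcover q
      obtain ⟨m', hm', hφm'⟩ := hcover q'
      have he : m⁻¹ * q ∈ Subgroup.center Q := by
        rw [← hker, MonoidHom.mem_ker, map_mul, map_inv, hφm, inv_mul_cancel]
      have he' : m'⁻¹ * q' ∈ Subgroup.center Q := by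
        rw [← hker, MonoidHom.mem_ker, map_mul, map_inv, hφm', inv_mul_cancel]
      have hq : q = m * (m⁻¹ * q) := by group
      have hq' : q' = m' * (m'⁻¹ * q') := by group
      have heq : ⁅q, q'⁆ = ⁅m, m'⁆ := by
        conv_lhs => rw [hq, hq']
        rw [commutator_mul_central_left _ _ _ he, commutator_mul_central_right _ _ _ he']
      rw [heq, commutatorElement_def]
      exact mul_mem (mul_mem (mul_mem hm hm') (inv_mem hm)) (inv_mem hm')
    rw [eq_top_iff, ← hperf, _root_.commutator_def]
    exact Subgroup.commutator_le.mpr (fun g₁ _ g₂ _ => hcomm g₁ g₂)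

lemma min_index {n : ℕ} (hn : 7 ≤ n) (hperf : commutator Q = ⊤)
    (hZ : Nat.card (Subgroup.center Q) = 2)
    (e : (Q ⧸ Subgroup.center Q) ≃* alternatingGroup (Fin n))
    (B : Subgroup Q) (hB : B.index < n) : B = ⊤ := by
  classical
  -- the order of Q is n!
  have hQalt : Nat.card Q = Nat.card (alternatingGroup (Fin n)) * 2 := by
    rw [Subgroup.card_eq_card_quotient_mul_card_subgroup (Subgroup.center Q), hZ,
      Nat.card_congr e.toEquiv]
  haveI : Nontrivial (Fin n) := ⟨⟨⟨0, by omega⟩, ⟨1, by omega⟩, by simp [Fin.ext_iff]⟩⟩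
  have htwoalt : 2 * Nat.card (alternatingGroup (Fin n)) = Nat.factorial n := by
    rw [Nat.card_eq_fintype_card, two_mul_card_alternatingGroup, Fintype.card_perm,
      Fintype.card_fin]
  have hQfact : Nat.card Q = Nat.factorial n := by omega
  -- the coset action
  haveI : Fintype (Q ⧸ B) := Fintype.ofFinite _
  haveI : DecidableEq (Q ⧸ B) := Classical.decEq _
  set φ' := MulAction.toPermHom Q (Q ⧸ B) with hφ'
  have hkerB : φ'.ker ≤ B := by
    rw [← Subgroup.normalCore_eq_ker]
    exact B.normalCore_le
  rcases normq hn hperf e φ'.ker inferInstance with hktop | hkcen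
  · rw [eq_top_iff]
    rw [hktop] at hkerB
    exact le_trans le_top hkerB
  · exfalso
    have hkcard : Nat.card φ'.ker ≤ 2 := by
      rw [← hZ]
      exact Subgroup.card_le_of_le hkcen
    -- |Q| = |Q/ker| * |ker| and Q/ker embeds in Perm (Q ⧸ B)
    have h1 : Nat.card Q = Nat.card (Q ⧸ φ'.ker) * Nat.card φ'.ker :=
      Subgroup.card_eq_card_quotient_mul_card_subgroup _
    have h2 : Nat.card (Q ⧸ φ'.ker) = Nat.card φ'.range :=
      Nat.card_congr (QuotientGroup.quotientKerEquivRange φ').toEquiv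
    have h3 : Nat.card φ'.range ≤ Nat.card (Perm (Q ⧸ B)) :=
      Subgroup.card_le_of_le le_top |>.trans (by rw [Subgroup.card_top])
    have h4 : Nat.card (Perm (Q ⧸ B)) = Nat.factorial B.index := by
      rw [Nat.card_eq_fintype_card, Fintype.card_perm, ← Nat.card_eq_fintype_card,
        ← Subgroup.index_eq_card]
    have h5 : Nat.factorial B.index ≤ Nat.factorial (n - 1) :=
      Nat.factorial_le (by omega)
    have h6 : Nat.factorial n = n * Nat.factorial (n - 1) := by
      conv_lhs => rw [show n = (n - 1) + 1 by omega]
      rw [Nat.factorial_succ]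
      congr 1
      omega
    have hkpos : 0 < Nat.card φ'.ker := Nat.card_pos
    have hfacpos : 0 < Nat.factorial (n - 1) := Nat.factorial_pos _
    -- n! ≤ 2 * (n-1)!  is absurd for n ≥ 7
    have hle : Nat.factorial n ≤ 2 * Nat.factorial (n - 1) := by
      calc Nat.factorial n = Nat.card Q := hQfact.symm
        _ = Nat.card (Q ⧸ φ'.ker) * Nat.card φ'.ker := h1
        _ ≤ Nat.card (Perm (Q ⧸ B)) * 2 := by
            rw [h2]
            exact Nat.mul_le_mul h3 hkcard
        _ = 2 * Nat.factorial B.index := by rw [h4, Nat.mul_comm]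
        _ ≤ 2 * Nat.factorial (n - 1) := by omega
    rw [h6] at hle
    nlinarith

end DCover
end Chunk8

section Main

open Equiv Equiv.Perm Subgroup DCover
open scoped commutatorElement
open scoped Pointwise

set_option maxHeartbeats 1600000

namespace DCover

variable {Q : Type*} [Group Q] [Finite Q]

lemma card_Q {n : ℕ} (hn : 7 ≤ n) (hZ : Nat.card (Subgroup.center Q) = 2)
    (e : (Q ⧸ Subgroup.center Q) ≃* alternatingGroup (Fin n)) :
    Nat.card Q = Nat.factorial n := by
  have hQalt : Nat.card Q = Nat.card (alternatingGroup (Fin n)) * 2 := by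
    rw [Subgroup.card_eq_card_quotient_mul_card_subgroup (Subgroup.center Q), hZ,
      Nat.card_congr e.toEquiv]
  haveI : Nontrivial (Fin n) := ⟨⟨⟨0, by omega⟩, ⟨1, by omega⟩, by simp [Fin.ext_iff]⟩⟩
  have htwoalt : 2 * Nat.card (alternatingGroup (Fin n)) = Nat.factorial n := by
    rw [Nat.card_eq_fintype_card, two_mul_card_alternatingGroup, Fintype.card_perm,
      Fintype.card_fin]
  omega

end DCover

/-- For `n ≥ 7`, every index-`n` subgroup of the double cover `2.Aₙ` (a finite
perfect group `Q` with `|Z(Q)| = 2` and `Q/Z(Q) ≅ Aₙ`) is isomorphic to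
`2.A_{n-1}` (perfect, centre of order 2, central quotient `A_{n-1}`);
consequently no index-`n` subgroup is isomorphic to `A_{n-1} × ℤ₂`. -/
theorem double_cover_An_index_n_subgroups {n : ℕ} (hn : 7 ≤ n)
    {Q : Type*} [Group Q] [Finite Q]
    (hperf : commutator Q = ⊤)
    (hZ : Nat.card (Subgroup.center Q) = 2)
    (hquot : Nonempty ((Q ⧸ Subgroup.center Q) ≃* alternatingGroup (Fin n))) :
    (∀ H : Subgroup Q, H.index = n →
      commutator ↥H = ⊤ ∧ Nat.card (Subgroup.center ↥H) = 2 ∧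
      Nonempty ((↥H ⧸ Subgroup.center ↥H) ≃* alternatingGroup (Fin (n - 1)))) ∧
    (∀ H : Subgroup Q, H.index = n →
      ¬ Nonempty (↥H ≃* (alternatingGroup (Fin (n - 1)) × Multiplicative (ZMod 2)))) := by
  classical
  obtain ⟨e⟩ := hquot
  have part1 : ∀ H : Subgroup Q, H.index = n →
      commutator ↥H = ⊤ ∧ Nat.card (Subgroup.center ↥H) = 2 ∧
      Nonempty ((↥H ⧸ Subgroup.center ↥H) ≃* alternatingGroup (Fin (n - 1))) := by
    intro H hidx
    -- Step 1 : the centre is contained in H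
    have hZH : Subgroup.center Q ≤ H := by
      by_cases hHB : Subgroup.center Q ≤ H
      · exact hHB
      exfalso
      set B := H ⊔ Subgroup.center Q with hB
      have hHleB : H ≤ B := le_sup_left
      have hrel := Subgroup.relIndex_mul_index hHleB
      rw [hidx] at hrel
      have hrne1 : H.relIndex B ≠ 1 := by
        intro h1
        exact hHB (le_trans le_sup_right (Subgroup.relIndex_eq_one.mp h1))
      have hrne0 : H.relIndex B ≠ 0 := by
        intro h0
        rw [h0, Nat.zero_mul] at hrel
        omega
      have hr2 : 2 ≤ H.relIndex B := by omega
      have hBlt : B.index < n := by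
        have h2 : B.index * 2 ≤ B.index * H.relIndex B := Nat.mul_le_mul_left _ hr2
        rw [Nat.mul_comm B.index (H.relIndex B), hrel] at h2
        have hBne : B.index ≠ 0 := Subgroup.index_ne_zero_of_finite
        omega
      have hBtop := min_index hn hperf hZ e B hBlt
      have hcomm : ∀ q q' : Q, ⁅q, q'⁆ ∈ H := by
        have hset : ((H : Set Q) * (Subgroup.center Q : Set Q)) = (B : Set Q) := by
          rw [hB]
          exact (Subgroup.mul_normal H (Subgroup.center Q)).symm
        intro q q'
        have hq : q ∈ (B : Set Q) := by rw [hBtop]; trivial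
        have hq' : q' ∈ (B : Set Q) := by rw [hBtop]; trivial
        rw [← hset] at hq hq'
        obtain ⟨h1, hh1, c1, hc1, rfl⟩ := hq
        obtain ⟨h2, hh2, c2, hc2, rfl⟩ := hq'
        rw [commutator_mul_central_left _ _ _ hc1, commutator_mul_central_right _ _ _ hc2,
          commutatorElement_def]
        exact mul_mem (mul_mem (mul_mem hh1 hh2) (inv_mem hh1)) (inv_mem hh2)
      have htle : (⊤ : Subgroup Q) ≤ H := by
        rw [← hperf, _root_.commutator_def]
        exact Subgroup.commutator_le.mpr fun a _ b _ => hcomm a b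
      have hHtop : H = ⊤ := eq_top_iff.mpr htle
      rw [hHtop, Subgroup.index_top] at hidx
      omega
    -- Step 2 : the coset action
    haveI : Fintype (Q ⧸ H) := Fintype.ofFinite _
    haveI : DecidableEq (Q ⧸ H) := Classical.decEq _
    have hcardX : Fintype.card (Q ⧸ H) = n := by
      rw [← Nat.card_eq_fintype_card, ← Subgroup.index_eq_card, hidx]
    set φ := MulAction.toPermHom Q (Q ⧸ H) with hφ
    have hkerH : φ.ker ≤ H := by
      rw [hφ, ← Subgroup.normalCore_eq_ker]
      exact H.normalCore_le
    have hZker : Subgroup.center Q ≤ φ.ker := by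
      intro c hc
      rw [MonoidHom.mem_ker]
      ext x
      refine QuotientGroup.induction_on x ?_
      intro q
      show c • ((q : Q ⧸ H)) = (q : Q ⧸ H)
      rw [MulAction.Quotient.smul_mk]
      rw [QuotientGroup.eq, smul_eq_mul]
      have hcen := Subgroup.mem_center_iff.mp (inv_mem hc)
      have heq : (c * q)⁻¹ * q = c⁻¹ := by
        rw [mul_inv_rev, hcen q⁻¹, mul_assoc, inv_mul_cancel, mul_one]
      rw [heq]
      exact inv_mem (hZH hc)
    have hkerZ : φ.ker ≤ Subgroup.center Q := by
      rcases normq hn hperf e φ.ker inferInstance with h | h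
      · exfalso
        rw [h] at hkerH
        have hHtop : H = ⊤ := eq_top_iff.mpr hkerH
        rw [hHtop, Subgroup.index_top] at hidx
        omega
      · exact h
    have hker : φ.ker = Subgroup.center Q := le_antisymm hkerZ hZker
    haveI : Nontrivial (Q ⧸ H) := by
      rw [← Fintype.one_lt_card_iff_nontrivial]
      omega
    have hrange : φ.range = alternatingGroup (Q ⧸ H) := by
      apply range_eq_alternating
      have h1 : Nat.card Q = Nat.card (Q ⧸ φ.ker) * Nat.card φ.ker :=
        Subgroup.card_eq_card_quotient_mul_card_subgroup _
      have h2 : Nat.card (Q ⧸ φ.ker) = Nat.card φ.range :=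
        Nat.card_congr (QuotientGroup.quotientKerEquivRange φ).toEquiv
      have h3 : Nat.card φ.ker = 2 := by rw [hker]; exact hZ
      have h4 : Nat.card (Perm (Q ⧸ H)) = Nat.factorial n := by
        rw [Nat.card_eq_fintype_card, Fintype.card_perm, hcardX]
      have h5 := card_Q hn hZ e
      have h6 : Nat.card Q = Nat.card φ.range * 2 := by rw [h1, h2, h3]
      omega
    have h7' : 7 ≤ Fintype.card (Q ⧸ H) := by omega
    -- Step 3 : H is the preimage of a point stabilizer
    have hHstab : H = Subgroup.comap φ (Wpt ((1 : Q) : Q ⧸ H)) := by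
      ext q
      rw [Subgroup.mem_comap, mem_Wpt]
      constructor
      · intro hq
        refine ⟨by rw [← hrange]; exact ⟨q, rfl⟩, ?_⟩
        show q • (((1 : Q) : Q ⧸ H)) = (((1 : Q) : Q ⧸ H))
        rw [MulAction.Quotient.smul_mk, QuotientGroup.eq]
        simpa using inv_mem hq
      · rintro ⟨-, hfix⟩
        have hfix' : q • (((1 : Q) : Q ⧸ H)) = (((1 : Q) : Q ⧸ H)) := hfix
        rw [MulAction.Quotient.smul_mk, QuotientGroup.eq] at hfix'
        simp only [mul_one] at hfix'
        simpa using inv_mem hfix'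
    obtain ⟨hc1, hc2, ⟨e3⟩⟩ :=
      core_results hperf hZ φ hrange hker h7' ((1 : Q) : Q ⧸ H)
    rw [← hHstab] at hc1 hc2 e3
    refine ⟨hc1, hc2, ⟨e3.trans (altIso (Fintype.equivFinOfCardEq ?_))⟩⟩
    rw [card_ne_point, hcardX]
  refine ⟨part1, ?_⟩
  intro H hidx hne
  obtain ⟨eiso⟩ := hne
  have hperfH := (part1 H hidx).1
  have hP : commutator (alternatingGroup (Fin (n - 1)) × Multiplicative (ZMod 2)) = ⊤ :=
    commutator_top_of_mulEquiv eiso hperfH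
  set π2 := MonoidHom.snd (alternatingGroup (Fin (n - 1))) (Multiplicative (ZMod 2)) with hπ2
  have hsurj : Function.Surjective π2 := fun c => ⟨(1, c), rfl⟩
  have h1 : Subgroup.map π2 ⊤ = ⊤ := Subgroup.map_top_of_surjective _ hsurj
  have h2 : (⊤ : Subgroup (Multiplicative (ZMod 2))) ≤ ⊥ := by
    calc (⊤ : Subgroup (Multiplicative (ZMod 2))) = Subgroup.map π2 ⊤ := h1.symm
      _ = Subgroup.map π2 (commutator _) := by rw [hP]
      _ = ⁅Subgroup.map π2 ⊤, Subgroup.map π2 ⊤⁆ := by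
          rw [_root_.commutator_def, Subgroup.map_commutator]
      _ ≤ ⊥ := Subgroup.commutator_le.mpr (fun a _ b _ => by
          rw [Subgroup.mem_bot, commutatorElement_eq_one_iff_mul_comm]
          exact mul_comm a b)
  have h3 : Multiplicative.ofAdd (1 : ZMod 2) = 1 :=
    Subgroup.mem_bot.mp (h2 (Subgroup.mem_top _))
  have h4 : (1 : ZMod 2) = 0 := congrArg Multiplicative.toAdd h3
  exact absurd h4 (by decide)

end Main
end

section
/- Let Γ be a connected graph, X ≤ Aut(Γ) arc-transitive of prime valency p, and N ⊴ X with at least three orbits on V(Γ). Then N acts semiregularly on V(Γ) (all vertex stabilizers N_v are trivial), N is the kernel of the action of X on the orbit set of N, the quotient graph Γ_N has valency p, and X/N acts arc-transitively on Γ_N with (X/N)_{v̄} ≅ X_v for v ∈ V(Γ). -/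
set_option linter.unusedSectionVars false
set_option maxHeartbeats 1000000


/-- The set of orbits of a subgroup `N ≤ Sym(V)` on `V`. -/
abbrev orbQuot {V : Type*} (N : Subgroup (Equiv.Perm V)) :=
  Quotient (MulAction.orbitRel N V)

/-- The normal quotient graph: vertices are the `N`-orbits, two orbits being
adjacent iff some vertex of one is adjacent to some vertex of the other. -/
def quotGraph {V : Type*} (Γ : SimpleGraph V) (N : Subgroup (Equiv.Perm V)) :
    SimpleGraph (orbQuot N) where
  Adj a b := a ≠ b ∧ ∃ u w : V,
    Quotient.mk (MulAction.orbitRel N V) u = a ∧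
    Quotient.mk (MulAction.orbitRel N V) w = b ∧ Γ.Adj u w
  symm := by
    constructor
    rintro a b ⟨hne, u, w, hu, hw, h⟩
    exact ⟨hne.symm, w, u, hw, hu, h.symm⟩
  loopless := by constructor; rintro a ⟨hne, _⟩; exact hne rfl

/-- The stabilizer in `X` of the `N`-orbit of `v`, as a subgroup of `Sym(V)`
(for `N` normal in `X`). -/
def orbStab {V : Type*} (X N : Subgroup (Equiv.Perm V)) (hNX : N ≤ X)
    (hNnorm : ∀ x ∈ X, ∀ n ∈ N, x * n * x⁻¹ ∈ N) (v : V) :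
    Subgroup (Equiv.Perm V) where
  carrier := {x | x ∈ X ∧
    Quotient.mk (MulAction.orbitRel N V) (x v) =
    Quotient.mk (MulAction.orbitRel N V) v}
  one_mem' := ⟨X.one_mem, rfl⟩
  mul_mem' := by
    rintro x y ⟨hxX, hx2⟩ ⟨hyX, hy2⟩
    refine ⟨X.mul_mem hxX hyX, ?_⟩
    obtain ⟨n, hn⟩ := Quotient.exact hy2
    have hm : x * (n : Equiv.Perm V) * x⁻¹ ∈ N := hNnorm x hxX n n.2
    have key : Quotient.mk (MulAction.orbitRel N V) ((x * y) v) =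
        Quotient.mk (MulAction.orbitRel N V) (x v) := by
      refine Quotient.sound ⟨⟨x * (n : Equiv.Perm V) * x⁻¹, hm⟩, ?_⟩
      show (x * (n : Equiv.Perm V) * x⁻¹) • (x v) = (x * y) v
      have hnv : (n : Equiv.Perm V) v = y v := hn
      simp [Equiv.Perm.smul_def, Equiv.Perm.mul_apply, hnv]
    exact key.trans hx2
  inv_mem' := by
    rintro x ⟨hxX, hx2⟩
    refine ⟨X.inv_mem hxX, ?_⟩
    obtain ⟨n, hn⟩ := Quotient.exact hx2
    have hm : x⁻¹ * ((n : Equiv.Perm V))⁻¹ * x ∈ N := by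
      have := hNnorm x⁻¹ (X.inv_mem hxX) _ (N.inv_mem n.2)
      simpa using this
    refine Quotient.sound ⟨⟨x⁻¹ * ((n : Equiv.Perm V))⁻¹ * x, hm⟩, ?_⟩
    show (x⁻¹ * ((n : Equiv.Perm V))⁻¹ * x) • v = x⁻¹ v
    have hnv : (n : Equiv.Perm V) v = x v := hn
    have hinv : ((n : Equiv.Perm V))⁻¹ (x v) = v := by
      rw [← hnv]; simp
    simp [Equiv.Perm.smul_def, Equiv.Perm.mul_apply, hinv]

section
variable {V : Type*} [Finite V] (Γ : SimpleGraph V) (X N : Subgroup (Equiv.Perm V))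

local notation "qmk" => Quotient.mk (MulAction.orbitRel N V)

theorem LN.mk_smul (n : N) (u : V) : qmk ((n : Equiv.Perm V) u) = qmk u :=
  Quotient.sound ⟨n, rfl⟩

theorem LN.smul_mk (hNnorm : ∀ x ∈ X, ∀ n ∈ N, x * n * x⁻¹ ∈ N)
    {x : Equiv.Perm V} (hx : x ∈ X) {u w : V} (h : qmk u = qmk w) :
    qmk (x u) = qmk (x w) := by
  obtain ⟨n, hn⟩ := Quotient.exact h
  refine Quotient.sound ⟨⟨x * (n : Equiv.Perm V) * x⁻¹, hNnorm x hx n n.2⟩, ?_⟩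
  show (x * (n : Equiv.Perm V) * x⁻¹) • (x w) = x u
  have hn' : (n : Equiv.Perm V) w = u := hn
  simp [Equiv.Perm.smul_def, Equiv.Perm.mul_apply, hn']

theorem LN.walk_prop (P : V → Prop) (hstep : ∀ z z', Γ.Adj z z' → P z → P z')
    {z₁ z₂ : V} (w : Γ.Walk z₁ z₂) : P z₁ → P z₂ := by
  induction w with
  | nil => exact id
  | cons h q ih => exact fun hp => ih (hstep _ _ h hp)

theorem LN.nbr_nonempty {p : ℕ} (hp : p.Prime)
    (hval : ∀ u : V, Nat.card (Γ.neighborSet u) = p) (u : V) :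
    ∃ w, Γ.Adj u w := by
  have hpos : 0 < Nat.card (Γ.neighborSet u) := by rw [hval u]; exact hp.pos
  have hne : Nonempty (Γ.neighborSet u) := (Nat.card_pos_iff.mp hpos).1
  obtain ⟨⟨w, hw⟩⟩ := hne
  exact ⟨w, hw⟩

theorem LN.vtrans {p : ℕ} (hp : p.Prime)
    (hval : ∀ u : V, Nat.card (Γ.neighborSet u) = p)
    (harc : ∀ u w u' w' : V, Γ.Adj u w → Γ.Adj u' w' →
      ∃ x ∈ X, x u = u' ∧ x w = w') (u w : V) : ∃ x ∈ X, x u = w := by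
  obtain ⟨u', hu'⟩ := LN.nbr_nonempty Γ hp hval u
  obtain ⟨w', hw'⟩ := LN.nbr_nonempty Γ hp hval w
  obtain ⟨x, hx, h1, _⟩ := harc u u' w w' hu' hw'
  exact ⟨x, hx, h1⟩

theorem LN.no_internal
    (hconn : Γ.Connected)
    (harc : ∀ u w u' w' : V, Γ.Adj u w → Γ.Adj u' w' →
      ∃ x ∈ X, x u = u' ∧ x w = w')
    (hNnorm : ∀ x ∈ X, ∀ n ∈ N, x * n * x⁻¹ ∈ N)
    (horb : ∃ a b c : orbQuot N, a ≠ b ∧ a ≠ c ∧ b ≠ c)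
    {u w : V} (h : Γ.Adj u w) : qmk u ≠ qmk w := by
  intro heq
  have hedge : ∀ z z' : V, Γ.Adj z z' → qmk z = qmk z' := by
    intro z z' hzz'
    obtain ⟨x, hx, hxu, hxw⟩ := harc u w z z' h hzz'
    calc qmk z = qmk (x u) := by rw [hxu]
    _ = qmk (x w) := LN.smul_mk X N hNnorm hx heq
    _ = qmk z' := by rw [hxw]
  have hall : ∀ z : V, qmk z = qmk u := by
    intro z
    exact LN.walk_prop Γ (fun t => qmk t = qmk u)
      (fun a b hab ha => (hedge a b hab).symm.trans ha) ((hconn u z).some) rfl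
  obtain ⟨a, b, c, hab, hac, hbc⟩ := horb
  obtain ⟨za, ha⟩ := Quotient.exists_rep a
  obtain ⟨zb, hb⟩ := Quotient.exists_rep b
  exact hab (by rw [← ha, ← hb, hall za, hall zb])

theorem LN.two_orbit_aux (hconn : Γ.Connected)
    (horb : ∃ a b c : orbQuot N, a ≠ b ∧ a ≠ c ∧ b ≠ c)
    (h : ∀ z z' z'' : V, Γ.Adj z z' → Γ.Adj z z'' → qmk z' = qmk z'')
    {v₀ w₀ : V} (hadj : Γ.Adj v₀ w₀) : False := by
  have key : ∀ z : V,
      (qmk z = qmk v₀ ∧ ∀ y, Γ.Adj z y → qmk y = qmk w₀) ∨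
      (qmk z = qmk w₀ ∧ ∀ y, Γ.Adj z y → qmk y = qmk v₀) := by
    intro z
    refine LN.walk_prop Γ
      (P := fun t => (qmk t = qmk v₀ ∧ ∀ y, Γ.Adj t y → qmk y = qmk w₀) ∨
        (qmk t = qmk w₀ ∧ ∀ y, Γ.Adj t y → qmk y = qmk v₀)) ?_ ((hconn v₀ z).some)
      (Or.inl ⟨rfl, fun y hy => (h v₀ w₀ y hadj hy).symm⟩)
    rintro a b hab (⟨ha1, ha2⟩ | ⟨ha1, ha2⟩)
    · refine Or.inr ⟨ha2 b hab, fun y hy => ?_⟩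
      have := h b a y hab.symm hy
      rw [← this, ha1]
    · refine Or.inl ⟨ha2 b hab, fun y hy => ?_⟩
      have := h b a y hab.symm hy
      rw [← this, ha1]
  have key2 : ∀ z : V, qmk z = qmk v₀ ∨ qmk z = qmk w₀ := by
    intro z; rcases key z with ⟨h1, _⟩ | ⟨h1, _⟩
    · exact Or.inl h1
    · exact Or.inr h1
  have key3 : ∀ q : orbQuot N, q = qmk v₀ ∨ q = qmk w₀ := by
    intro q
    obtain ⟨z, hz⟩ := Quotient.exists_rep q
    rw [← hz]; exact key2 z
  obtain ⟨a, b, c, hab, hac, hbc⟩ := horb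
  rcases key3 a with h1 | h1 <;> rcases key3 b with h2 | h2 <;>
    rcases key3 c with h3 | h3 <;>
    first
      | exact hab (h1.trans h2.symm)
      | exact hac (h1.trans h3.symm)
      | exact hbc (h2.trans h3.symm)

theorem LN.not_all_one_orbit {p : ℕ} (hp : p.Prime)
    (hXaut : ∀ x ∈ X, ∀ u w : V, Γ.Adj (x u) (x w) ↔ Γ.Adj u w)
    (hconn : Γ.Connected)
    (hval : ∀ u : V, Nat.card (Γ.neighborSet u) = p)
    (harc : ∀ u w u' w' : V, Γ.Adj u w → Γ.Adj u' w' →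
      ∃ x ∈ X, x u = u' ∧ x w = w')
    (hNnorm : ∀ x ∈ X, ∀ n ∈ N, x * n * x⁻¹ ∈ N)
    (horb : ∃ a b c : orbQuot N, a ≠ b ∧ a ≠ c ∧ b ≠ c) (u : V)
    (h : ∀ w w' : V, Γ.Adj u w → Γ.Adj u w' → qmk w = qmk w') : False := by
  have h' : ∀ z z' z'' : V, Γ.Adj z z' → Γ.Adj z z'' → qmk z' = qmk z'' := by
    intro z z' z'' h1 h2
    obtain ⟨x, hx, hxu⟩ := LN.vtrans Γ X hp hval harc u z
    have e1 : Γ.Adj u (x⁻¹ z') := (hXaut x hx u (x⁻¹ z')).mp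
      (by simpa [hxu, Equiv.Perm.inv_def, Equiv.apply_symm_apply] using h1)
    have e2 : Γ.Adj u (x⁻¹ z'') := (hXaut x hx u (x⁻¹ z'')).mp
      (by simpa [hxu, Equiv.Perm.inv_def, Equiv.apply_symm_apply] using h2)
    have hq := h _ _ e1 e2
    have := LN.smul_mk X N hNnorm hx hq
    simpa [Equiv.Perm.inv_def, Equiv.apply_symm_apply] using this
  obtain ⟨w₀, hw₀⟩ := LN.nbr_nonempty Γ hp hval u
  exact LN.two_orbit_aux Γ N hconn horb h' hw₀

theorem LN.inj_nbrs {p : ℕ} (hp : p.Prime)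
    (hXaut : ∀ x ∈ X, ∀ u w : V, Γ.Adj (x u) (x w) ↔ Γ.Adj u w)
    (hconn : Γ.Connected)
    (hval : ∀ u : V, Nat.card (Γ.neighborSet u) = p)
    (harc : ∀ u w u' w' : V, Γ.Adj u w → Γ.Adj u' w' →
      ∃ x ∈ X, x u = u' ∧ x w = w')
    (hNnorm : ∀ x ∈ X, ∀ n ∈ N, x * n * x⁻¹ ∈ N)
    (horb : ∃ a b c : orbQuot N, a ≠ b ∧ a ≠ c ∧ b ≠ c) :
    ∀ u w w' : V, Γ.Adj u w → Γ.Adj u w' → qmk w = qmk w' → w = w' := by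
  intro u w w' hw hw' hmk
  by_contra hne
  classical
  letI : Fintype V := Fintype.ofFinite V
  set s : Finset V := Set.toFinset (Γ.neighborSet u) with hsdef
  have hmem : ∀ z, z ∈ s ↔ Γ.Adj u z := by
    intro z; simp [hsdef, Set.mem_toFinset]
  have hs : s.card = p := by
    rw [hsdef, Set.toFinset_card, ← Nat.card_eq_fintype_card]; exact hval u
  have hfib : ∀ z ∈ s, ∀ z' ∈ s,
      (s.filter (fun y => qmk y = qmk z)).card =
      (s.filter (fun y => qmk y = qmk z')).card := by
    intro z hz z' hz'
    obtain ⟨x, hx, hxu, hxz⟩ := harc u z u z' ((hmem z).mp hz) ((hmem z').mp hz')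
    have hxu' : x⁻¹ u = u := by nth_rewrite 1 [← hxu]; simp
    have hxz' : x⁻¹ z' = z := by rw [← hxz]; simp
    refine Finset.card_bij (fun y _ => x y) ?_ ?_ ?_
    · intro y hy
      rw [Finset.mem_filter] at hy ⊢
      refine ⟨?_, ?_⟩
      · rw [hmem]
        have := (hXaut x hx u y).mpr ((hmem y).mp hy.1)
        rwa [hxu] at this
      · rw [← hxz]; exact LN.smul_mk X N hNnorm hx hy.2
    · intro y1 _ y2 _ he; exact x.injective he
    · intro y hy
      rw [Finset.mem_filter] at hy
      refine ⟨x⁻¹ y, ?_, by simp⟩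
      rw [Finset.mem_filter]
      refine ⟨?_, ?_⟩
      · rw [hmem]
        have := (hXaut x⁻¹ (X.inv_mem hx) u y).mpr ((hmem y).mp hy.1)
        rwa [hxu'] at this
      · have := LN.smul_mk X N hNnorm (X.inv_mem hx) hy.2
        rwa [hxz'] at this
  set T := s.image (fun z => qmk z) with hT
  have hsum := Finset.card_eq_sum_card_fiberwise
    (f := fun z => qmk z) (s := s) (t := T)
    (fun z hz => Finset.mem_image_of_mem _ hz)
  set k := (s.filter (fun y => qmk y = qmk w)).card with hk
  have hws : w ∈ s := (hmem w).mpr hw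
  have hw's : w' ∈ s := (hmem w').mpr hw'
  have hconst : ∀ t ∈ T, (s.filter (fun y => qmk y = t)).card = k := by
    intro t ht
    obtain ⟨z, hz, rfl⟩ := Finset.mem_image.mp ht
    exact hfib z hz w hws
  have hps : p = T.card * k := by
    rw [← hs, hsum, Finset.sum_congr rfl hconst, Finset.sum_const, smul_eq_mul]
  have hdvd : k ∣ p := ⟨T.card, by rw [hps]; ring⟩
  have hk2 : 1 < k := by
    rw [hk]
    refine Finset.one_lt_card.mpr ⟨w, ?_, w', ?_, hne⟩
    · rw [Finset.mem_filter]; exact ⟨hws, rfl⟩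
    · rw [Finset.mem_filter]; exact ⟨hw's, hmk.symm⟩
  have hkp : k = p := by
    rcases (Nat.Prime.eq_one_or_self_of_dvd hp k hdvd) with h1 | h1
    · omega
    · exact h1
  have hfull : s.filter (fun y => qmk y = qmk w) = s := by
    refine Finset.eq_of_subset_of_card_le (Finset.filter_subset _ s) ?_
    rw [hs, ← hkp, hk]
  have hallw : ∀ z z' : V, Γ.Adj u z → Γ.Adj u z' → qmk z = qmk z' := by
    intro z z' hz hz'
    have h1 : z ∈ s.filter (fun y => qmk y = qmk w) := by
      rw [hfull]; exact (hmem z).mpr hz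
    have h2 : z' ∈ s.filter (fun y => qmk y = qmk w) := by
      rw [hfull]; exact (hmem z').mpr hz'
    rw [Finset.mem_filter] at h1 h2
    rw [h1.2, h2.2]
  exact LN.not_all_one_orbit Γ X N hp hXaut hconn hval harc hNnorm horb u hallw

theorem LN.rigid {p : ℕ} (hp : p.Prime)
    (hXaut : ∀ x ∈ X, ∀ u w : V, Γ.Adj (x u) (x w) ↔ Γ.Adj u w)
    (hconn : Γ.Connected)
    (hval : ∀ u : V, Nat.card (Γ.neighborSet u) = p)
    (harc : ∀ u w u' w' : V, Γ.Adj u w → Γ.Adj u' w' →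
      ∃ x ∈ X, x u = u' ∧ x w = w')
    (hNnorm : ∀ x ∈ X, ∀ n ∈ N, x * n * x⁻¹ ∈ N)
    (horb : ∃ a b c : orbQuot N, a ≠ b ∧ a ≠ c ∧ b ≠ c)
    {y : Equiv.Perm V} (hy : y ∈ X)
    (hofix : ∀ z : V, qmk (y z) = qmk z) {u : V} (hu : y u = u) : y = 1 := by
  have hfix : ∀ z : V, y z = z := by
    intro z
    refine LN.walk_prop Γ (P := fun t => y t = t) ?_ ((hconn u z).some) hu
    intro a b hab ha
    have h1 : Γ.Adj a (y b) := by
      have := (hXaut y hy a b).mpr hab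
      rwa [ha] at this
    exact LN.inj_nbrs Γ X N hp hXaut hconn hval harc hNnorm horb
      a (y b) b h1 hab (hofix b)
  ext z
  simpa using hfix z

theorem LN.quot_nbrSet (hconn : Γ.Connected)
    (hXaut : ∀ x ∈ X, ∀ u w : V, Γ.Adj (x u) (x w) ↔ Γ.Adj u w)
    (harc : ∀ u w u' w' : V, Γ.Adj u w → Γ.Adj u' w' →
      ∃ x ∈ X, x u = u' ∧ x w = w')
    (hNX : N ≤ X)
    (hNnorm : ∀ x ∈ X, ∀ n ∈ N, x * n * x⁻¹ ∈ N)
    (horb : ∃ a b c : orbQuot N, a ≠ b ∧ a ≠ c ∧ b ≠ c) (u : V) :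
    (quotGraph Γ N).neighborSet (qmk u) =
      (fun z : V => qmk z) '' (Γ.neighborSet u) := by
  ext b
  simp only [SimpleGraph.mem_neighborSet, Set.mem_image]
  constructor
  · rintro ⟨_, u₀, w₀, hu₀, hw₀, hadj⟩
    obtain ⟨n, hn⟩ := Quotient.exact hu₀
    have hn' : (n : Equiv.Perm V) u = u₀ := hn
    have hinv : ((n : Equiv.Perm V))⁻¹ u₀ = u := by rw [← hn']; simp
    refine ⟨((n : Equiv.Perm V))⁻¹ w₀, ?_, ?_⟩
    · have := (hXaut ((n : Equiv.Perm V))⁻¹ (X.inv_mem (hNX n.2)) u₀ w₀).mpr hadj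
      rwa [hinv] at this
    · have : qmk (((n : Equiv.Perm V))⁻¹ w₀) = qmk w₀ := by
        have := LN.mk_smul N n (((n : Equiv.Perm V))⁻¹ w₀)
        simpa using this.symm
      rw [this, hw₀]
  · rintro ⟨w, hw, rfl⟩
    have hadj : Γ.Adj u w := hw
    refine ⟨(LN.no_internal Γ X N hconn harc hNnorm horb hadj), u, w, rfl, rfl, hadj⟩
end


/-- Lorimer's theorem: if `X` is arc-transitive on a connected graph of prime
valency `p` and `N ⊴ X` has at least three orbits, then `N` is semiregular, `N`
is the kernel of the action of `X` on the orbits, the quotient graph has valency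
`p`, `X` (hence `X/N`) is arc-transitive on it, and the stabilizer in `X/N` of
the orbit of `v` is isomorphic to `X_v`. -/
theorem lorimer_normal_quotient {V : Type*} [Finite V]
    (Γ : SimpleGraph V) (p : ℕ) (hp : p.Prime)
    (X N : Subgroup (Equiv.Perm V))
    (hXaut : ∀ x ∈ X, ∀ u w : V, Γ.Adj (x u) (x w) ↔ Γ.Adj u w)
    (hconn : Γ.Connected)
    (hval : ∀ u : V, Nat.card (Γ.neighborSet u) = p)
    (harc : ∀ u w u' w' : V, Γ.Adj u w → Γ.Adj u' w' →
      ∃ x ∈ X, x u = u' ∧ x w = w')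
    (hNX : N ≤ X) (hNnorm : ∀ x ∈ X, ∀ n ∈ N, x * n * x⁻¹ ∈ N)
    (horb : ∃ a b c : orbQuot N, a ≠ b ∧ a ≠ c ∧ b ≠ c)
    (v : V)
    [hns : (N.subgroupOf (orbStab X N hNX hNnorm v)).Normal] :
    (∀ n ∈ N, (∃ u : V, n u = u) → n = 1) ∧
    (∀ x ∈ X, ((∀ u : V, Quotient.mk (MulAction.orbitRel N V) (x u) =
        Quotient.mk (MulAction.orbitRel N V) u) ↔ x ∈ N)) ∧
    (∀ a : orbQuot N, Nat.card ((quotGraph Γ N).neighborSet a) = p) ∧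
    (∀ a b c d : orbQuot N, (quotGraph Γ N).Adj a b → (quotGraph Γ N).Adj c d →
      ∃ x ∈ X,
        (∀ u : V, Quotient.mk (MulAction.orbitRel N V) u = a →
          Quotient.mk (MulAction.orbitRel N V) (x u) = c) ∧
        (∀ u : V, Quotient.mk (MulAction.orbitRel N V) u = b →
          Quotient.mk (MulAction.orbitRel N V) (x u) = d)) ∧
    Nonempty ((↥(orbStab X N hNX hNnorm v) ⧸
        N.subgroupOf (orbStab X N hNX hNnorm v)) ≃*
      ↥(X ⊓ MulAction.stabilizer (Equiv.Perm V) v)) := by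

  classical
  have semireg : ∀ n ∈ N, (∃ u : V, n u = u) → n = 1 := by
    rintro n hn ⟨u, hu⟩
    exact LN.rigid Γ X N hp hXaut hconn hval harc hNnorm horb (hNX hn)
      (fun z => LN.mk_smul N ⟨n, hn⟩ z) hu
  refine ⟨semireg, ?_, ?_, ?_, ?_⟩
  · -- kernel
    intro x hx
    constructor
    · intro hfixorb
      obtain ⟨m, hm⟩ := Quotient.exact (hfixorb v)
      have hm' : (m : Equiv.Perm V) v = x v := hm
      have hy : ((m : Equiv.Perm V))⁻¹ * x ∈ X :=
        X.mul_mem (X.inv_mem (hNX m.2)) hx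
      have hyv : (((m : Equiv.Perm V))⁻¹ * x) v = v := by
        simp [Equiv.Perm.mul_apply, ← hm']
      have hyorb : ∀ z, Quotient.mk (MulAction.orbitRel N V)
          ((((m : Equiv.Perm V))⁻¹ * x) z) =
          Quotient.mk (MulAction.orbitRel N V) z := by
        intro z
        have h1 : Quotient.mk (MulAction.orbitRel N V) (((m : Equiv.Perm V))⁻¹ (x z)) =
            Quotient.mk (MulAction.orbitRel N V) (x z) := by
          have := LN.mk_smul N m (((m : Equiv.Perm V))⁻¹ (x z))
          simpa using this.symm
        calc Quotient.mk (MulAction.orbitRel N V) ((((m : Equiv.Perm V))⁻¹ * x) z)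
            = Quotient.mk (MulAction.orbitRel N V) (((m : Equiv.Perm V))⁻¹ (x z)) := rfl
        _ = Quotient.mk (MulAction.orbitRel N V) (x z) := h1
        _ = Quotient.mk (MulAction.orbitRel N V) z := hfixorb z
      have h1 := LN.rigid Γ X N hp hXaut hconn hval harc hNnorm horb hy hyorb hyv
      have hx' : x = (m : Equiv.Perm V) := by
        have := congrArg (fun g => (m : Equiv.Perm V) * g) h1
        simpa [← mul_assoc] using this
      rw [hx']; exact m.2
    · intro hxN u
      exact LN.mk_smul N ⟨x, hxN⟩ u
  · -- valency
    intro a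
    obtain ⟨u, hu⟩ := Quotient.exists_rep a
    rw [← hu, LN.quot_nbrSet Γ X N hconn hXaut harc hNX hNnorm horb u]
    have hinj : Set.InjOn (fun z : V => Quotient.mk (MulAction.orbitRel N V) z)
        (Γ.neighborSet u) := by
      intro z hz z' hz' he
      exact LN.inj_nbrs Γ X N hp hXaut hconn hval harc hNnorm horb u z z' hz hz' he
    rw [Nat.card_coe_set_eq, Set.ncard_image_of_injOn hinj,
      ← Nat.card_coe_set_eq]
    exact hval u
  · -- arc-transitivity
    rintro a b c d ⟨_, u1, w1, hu1, hw1, h1⟩ ⟨_, u2, w2, hu2, hw2, h2⟩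
    obtain ⟨x, hx, hxu, hxw⟩ := harc u1 w1 u2 w2 h1 h2
    refine ⟨x, hx, ?_, ?_⟩
    · intro z hz
      have hz1 : Quotient.mk (MulAction.orbitRel N V) z =
          Quotient.mk (MulAction.orbitRel N V) u1 := by rw [hz, ← hu1]
      have := LN.smul_mk X N hNnorm hx hz1
      rw [this, hxu, hu2]
    · intro z hz
      have hz1 : Quotient.mk (MulAction.orbitRel N V) z =
          Quotient.mk (MulAction.orbitRel N V) w1 := by rw [hz, ← hw1]
      have := LN.smul_mk X N hNnorm hx hz1
      rw [this, hxw, hw2]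
  · -- isomorphism
    set S := orbStab X N hNX hNnorm v with hSdef
    have hHS : X ⊓ MulAction.stabilizer (Equiv.Perm V) v ≤ S := by
      rintro x ⟨hx1, hx2⟩
      have hxv : x v = v := hx2
      exact ⟨hx1, by rw [hxv]⟩
    let φ := (QuotientGroup.mk' (N.subgroupOf S)).comp (Subgroup.inclusion hHS)
    have hinj : Function.Injective φ := by
      rw [injective_iff_map_eq_one]
      intro a ha
      have ha' : (QuotientGroup.mk (Subgroup.inclusion hHS a) :
          S ⧸ N.subgroupOf S) = 1 := ha
      have h1 : Subgroup.inclusion hHS a ∈ N.subgroupOf S := by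
        rwa [QuotientGroup.eq_one_iff] at ha'
      have h2 : (a : Equiv.Perm V) ∈ N := by
        rwa [Subgroup.mem_subgroupOf] at h1
      obtain ⟨haX, hast⟩ := Subgroup.mem_inf.mp a.2
      have h3 : (a : Equiv.Perm V) v = v := hast
      exact Subtype.ext (semireg _ h2 ⟨v, h3⟩)
    have hsurj : Function.Surjective φ := by
      intro b
      obtain ⟨s, rfl⟩ := QuotientGroup.mk'_surjective (N.subgroupOf S) b
      obtain ⟨hsX, hs2⟩ := s.2
      obtain ⟨n, hn⟩ := Quotient.exact hs2
      have hn' : (n : Equiv.Perm V) v = (s : Equiv.Perm V) v := hn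
      have hhX : ((n : Equiv.Perm V))⁻¹ * (s : Equiv.Perm V) ∈ X :=
        X.mul_mem (X.inv_mem (hNX n.2)) hsX
      have hhv : (((n : Equiv.Perm V))⁻¹ * (s : Equiv.Perm V)) v = v := by
        simp [Equiv.Perm.mul_apply, ← hn']
      have hmemH : ((n : Equiv.Perm V))⁻¹ * (s : Equiv.Perm V) ∈
          X ⊓ MulAction.stabilizer (Equiv.Perm V) v :=
        Subgroup.mem_inf.mpr ⟨hhX, MulAction.mem_stabilizer_iff.mpr hhv⟩
      refine ⟨⟨_, hmemH⟩, ?_⟩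
      show QuotientGroup.mk' (N.subgroupOf S) (Subgroup.inclusion hHS ⟨_, hmemH⟩) =
        QuotientGroup.mk' (N.subgroupOf S) s
      rw [QuotientGroup.mk'_eq_mk']
      refine ⟨(Subgroup.inclusion hHS ⟨_, hmemH⟩)⁻¹ * s, ?_, by group⟩
      rw [Subgroup.mem_subgroupOf]
      have hcoe : ((Subgroup.inclusion hHS ⟨_, hmemH⟩)⁻¹ * s : S) =
          (((n : Equiv.Perm V))⁻¹ * (s : Equiv.Perm V) : Equiv.Perm V)⁻¹ *
            (s : Equiv.Perm V) := rfl
      rw [hcoe]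
      have := hNnorm ((s : Equiv.Perm V))⁻¹ (X.inv_mem hsX) (n : Equiv.Perm V) n.2
      have heq : (((n : Equiv.Perm V))⁻¹ * (s : Equiv.Perm V))⁻¹ *
          (s : Equiv.Perm V) =
          ((s : Equiv.Perm V))⁻¹ * (n : Equiv.Perm V) *
            (((s : Equiv.Perm V))⁻¹)⁻¹ := by group
      rw [heq]
      exact this
    exact ⟨(MulEquiv.ofBijective φ ⟨hinj, hsurj⟩).symm⟩
end
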